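/- arXiv:1810.11180 — 10 statements merged into one kernel-verified Lean document; each statement's English description precedes it below -/
import Mathlib

section
/- If Z is a sub-gaussian random variable in a real separable Hilbert space H with respect to Γ, meaning E[exp⟨z, Z−μ⟩] ≤ exp(α²⟨Γz, z⟩/2) for all z ∈ H where α = ‖Z‖_{ψ₂,Γ}, then the covariance operator Σ of Z satisfies Σ ⪯ 4α²Γ, i.e., 4α²Γ − Σ is positive semidefinite. -/
open MeasureTheory
open scoped RealInnerProductSpace

private lemma aux_two_add_sq_of_nonneg {x : ℝ} (hx : 0 ≤ x) :
    2 + x ^ 2 ≤ Real.exp x + Real.exp (-x) := by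
  have ha : Real.exp (x / 2) * Real.exp (-(x / 2)) = 1 := by
    rw [← Real.exp_add]; simp
  have hx2 : Real.exp x = Real.exp (x / 2) * Real.exp (x / 2) := by
    rw [← Real.exp_add]; ring_nf
  have hx3 : Real.exp (-x) = Real.exp (-(x / 2)) * Real.exp (-(x / 2)) := by
    rw [← Real.exp_add]; ring_nf
  have hs : x / 2 ≤ Real.sinh (x / 2) := by
    rcases eq_or_lt_of_le hx with h | h
    · simp [← h]
    · exact (Real.self_lt_sinh_iff.2 (by linarith)).le
  have hsinh : Real.sinh (x / 2) = (Real.exp (x / 2) - Real.exp (-(x / 2))) / 2 :=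
    Real.sinh_eq _
  nlinarith [sq_nonneg (Real.exp (x / 2) - Real.exp (-(x / 2))), hx]

private lemma aux_two_add_sq (x : ℝ) : 2 + x ^ 2 ≤ Real.exp x + Real.exp (-x) := by
  rcases le_total 0 x with h | h
  · exact aux_two_add_sq_of_nonneg h
  · have := aux_two_add_sq_of_nonneg (neg_nonneg.2 h)
    simpa [neg_sq, add_comm] using this

/-- If `Z` is sub-gaussian in a real separable Hilbert space `H` with respect to `Γ`,
i.e. `E[exp⟪z, Z − μ⟫] ≤ exp(α² ⟪Γ z, z⟫ / 2)` for all `z ∈ H` where `α = ‖Z‖_{ψ₂,Γ}`,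
then the covariance operator `Cov` of `Z` satisfies `Cov ⪯ 4 α² Γ`, i.e.
`4 α² Γ − Cov` is positive semidefinite. -/
theorem stmt_1
    {H : Type*} [NormedAddCommGroup H] [InnerProductSpace ℝ H] [CompleteSpace H]
    [TopologicalSpace.SeparableSpace H] [MeasurableSpace H] [BorelSpace H]
    {Ω : Type*} [MeasurableSpace Ω] {P : Measure Ω} [IsProbabilityMeasure P]
    (Γ Cov : H →L[ℝ] H)
    (hΓsa : IsSelfAdjoint Γ) (hΓpos : ∀ z : H, 0 ≤ ⟪Γ z, z⟫)
    {ι : Type*} (b : HilbertBasis ι ℝ H)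
    (hΓtr : Summable (fun i => ⟪Γ (b i), b i⟫))
    (Z : Ω → H) (hZmeas : AEMeasurable Z P) (hZint : Integrable Z P)
    (μ : H) (hμ : ∫ ω, Z ω ∂P = μ)
    (α : ℝ) (hα : 0 ≤ α)
    (hmgf : ∀ z : H, Integrable (fun ω => Real.exp ⟪z, Z ω - μ⟫) P ∧
      ∫ ω, Real.exp ⟪z, Z ω - μ⟫ ∂P ≤ Real.exp (α ^ 2 * ⟪Γ z, z⟫ / 2))
    (hCov : ∀ z w : H, ⟪Cov z, w⟫ = ∫ ω, ⟪Z ω - μ, z⟫ * ⟪Z ω - μ, w⟫ ∂P) :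
    ∀ z : H, 0 ≤ ⟪((4 * α ^ 2) • Γ - Cov) z, z⟫ := by
  intro z
  set f : Ω → ℝ := fun ω => ⟪Z ω - μ, z⟫ with hf
  set σ2 : ℝ := α ^ 2 * ⟪Γ z, z⟫ with hσ2
  have hσ2nn : 0 ≤ σ2 := mul_nonneg (sq_nonneg _) (hΓpos z)
  -- rewrite goal
  have hgoal : ⟪((4 * α ^ 2) • Γ - Cov) z, z⟫ = 4 * σ2 - ∫ ω, f ω * f ω ∂P := by
    rw [ContinuousLinearMap.sub_apply, inner_sub_left, ContinuousLinearMap.smul_apply,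
      real_inner_smul_left, hCov z z]
    ring
  rw [hgoal, sub_nonneg]
  -- for each t, the two exponentials are integrable and bounded
  have hexp : ∀ t : ℝ, Integrable (fun ω => Real.exp (t * f ω)) P ∧
      ∫ ω, Real.exp (t * f ω) ∂P ≤ Real.exp (t ^ 2 * σ2 / 2) := by
    intro t
    have h := hmgf (t • z)
    have hin : ∀ ω, ⟪t • z, Z ω - μ⟫ = t * f ω := by
      intro ω; rw [real_inner_smul_left, real_inner_comm]
    have hΓt : ⟪Γ (t • z), t • z⟫ = t ^ 2 * ⟪Γ z, z⟫ := by
      rw [ContinuousLinearMap.map_smul, real_inner_smul_left, real_inner_smul_right]; ring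
    simp only [hin, hΓt] at h
    refine ⟨h.1, h.2.trans_eq ?_⟩
    congr 1; rw [hσ2]; ring
  -- integrability of f^2
  have h1 := hexp 1
  have hm1 := hexp (-1)
  simp only [one_mul, neg_one_mul] at h1 hm1
  have hbdd_meas : AEStronglyMeasurable f P := by
    have : AEStronglyMeasurable (fun ω => Z ω - μ) P :=
      (hZmeas.sub aemeasurable_const).aestronglyMeasurable
    exact this.inner aestronglyMeasurable_const
  have hsq_int : Integrable (fun ω => f ω * f ω) P := by
    refine Integrable.mono' ((h1.1.add hm1.1).sub (integrable_const 2)) ?_ ?_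
    · exact hbdd_meas.mul hbdd_meas
    · filter_upwards with ω
      have := aux_two_add_sq (f ω)
      rw [Real.norm_eq_abs, abs_of_nonneg (mul_self_nonneg _)]
      simp only [Pi.add_apply, Pi.sub_apply]
      nlinarith
  -- key inequality for each positive t
  have key : ∀ t : ℝ, 0 < t →
      t ^ 2 * ∫ ω, f ω * f ω ∂P ≤ 2 * (Real.exp (t ^ 2 * σ2 / 2) - 1) := by
    intro t ht
    have hA := hexp t
    have hB := hexp (-t)
    have hptw : ∀ ω, 2 + t ^ 2 * (f ω * f ω) ≤
        Real.exp (t * f ω) + Real.exp (-t * f ω) := by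
      intro ω
      have := aux_two_add_sq (t * f ω)
      have h2 : -(t * f ω) = -t * f ω := by ring
      rw [h2] at this
      nlinarith [this]
    have hint_lhs : Integrable (fun ω => 2 + t ^ 2 * (f ω * f ω)) P :=
      (integrable_const 2).add (hsq_int.const_mul _)
    have hle : ∫ ω, (2 + t ^ 2 * (f ω * f ω)) ∂P ≤
        ∫ ω, (Real.exp (t * f ω) + Real.exp (-t * f ω)) ∂P :=
      integral_mono hint_lhs (hA.1.add hB.1) fun ω => hptw ω
    rw [integral_add (integrable_const 2) (hsq_int.const_mul _),
      integral_add hA.1 hB.1, integral_const, integral_const_mul] at hle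
    have hBexp : ∫ ω, Real.exp (-t * f ω) ∂P ≤ Real.exp (t ^ 2 * σ2 / 2) := by
      have := hB.2
      have h2 : (-t) ^ 2 = t ^ 2 := by ring
      rwa [h2] at this
    have hmeas : P.real Set.univ = 1 := by simp
    rw [hmeas] at hle
    simp only [smul_eq_mul, one_mul] at hle
    have := hA.2
    linarith
  -- conclude
  rcases eq_or_lt_of_le hσ2nn with h0 | h0
  · have k := key 1 one_pos
    rw [← h0] at k
    simp at k
    nlinarith
  · set t : ℝ := Real.sqrt (2 / σ2) with htdef
    have ht2 : t ^ 2 = 2 / σ2 := Real.sq_sqrt (by positivity)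
    have ht : 0 < t := Real.sqrt_pos.2 (by positivity)
    have k := key t ht
    rw [ht2] at k
    have harg : 2 / σ2 * σ2 / 2 = 1 := by field_simp
    rw [harg] at k
    have he : Real.exp 1 < 3 := by
      have := Real.exp_one_lt_d9; linarith
    have : (2 / σ2) * ∫ ω, f ω * f ω ∂P ≤ 2 * (Real.exp 1 - 1) := k
    have hpos : 0 < 2 / σ2 := by positivity
    calc ∫ ω, f ω * f ω ∂P = σ2 / 2 * ((2 / σ2) * ∫ ω, f ω * f ω ∂P) := by
          field_simp
      _ ≤ σ2 / 2 * (2 * (Real.exp 1 - 1)) := by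
          apply mul_le_mul_of_nonneg_left this (by positivity)
      _ ≤ 4 * σ2 := by nlinarith
end

section
/- Let X be a mean-zero random variable in ℝⁿ with E[exp(zᵀX)] ≤ exp(zᵀΓz/2) for all z ∈ ℝⁿ, where Γ is an n×n positive semidefinite matrix, and let Z ~ N(0,Γ). Then for all 0 ≤ t < ‖Γ‖_op⁻¹, E[exp(t‖X‖²/2)] ≤ E[exp(t‖Z‖²/2)]. -/
open MeasureTheory
open scoped RealInnerProductSpace

open ProbabilityTheory Real
open scoped ENNReal NNReal


lemma pdf_mul_exp (c x : ℝ) :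
    gaussianPDFReal 0 1 x * Real.exp (c * x)
      = (√(2*π))⁻¹ * (Real.exp (c^2/2) * Real.exp (-(1/2) * (x - c)^2)) := by
  rw [gaussianPDFReal]
  push_cast
  rw [mul_one, mul_assoc, ← Real.exp_add, ← Real.exp_add]
  congr 1
  rw [Real.exp_eq_exp]
  ring

lemma mgf1 (c : ℝ) :
    ∫⁻ x, ENNReal.ofReal (Real.exp (c * x)) ∂(gaussianReal 0 1)
      = ENNReal.ofReal (Real.exp (c ^ 2 / 2)) := by
  rw [gaussianReal_of_var_ne_zero 0 one_ne_zero,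
    lintegral_withDensity_eq_lintegral_mul _ (measurable_gaussianPDF 0 1)
      (by fun_prop)]
  have hbase : Integrable (fun x : ℝ => Real.exp (-(1/2) * x^2)) := by
    simpa using integrable_exp_neg_mul_sq (show (0:ℝ) < 1/2 by norm_num)
  have hint : Integrable (fun x : ℝ =>
      (√(2*π))⁻¹ * (Real.exp (c^2/2) * Real.exp (-(1/2) * (x - c)^2))) :=
    (((hbase.comp_sub_right c).const_mul _).const_mul _)
  have h1 : ∫⁻ x, (gaussianPDF 0 1 * fun x => ENNReal.ofReal (Real.exp (c * x))) x
      = ∫⁻ x, ENNReal.ofReal ((√(2*π))⁻¹ * (Real.exp (c^2/2) * Real.exp (-(1/2) * (x - c)^2))) := by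
    congr 1; ext x
    rw [Pi.mul_apply, gaussianPDF, ← ENNReal.ofReal_mul (gaussianPDFReal_nonneg 0 1 x),
      pdf_mul_exp]
  rw [h1, ← ofReal_integral_eq_lintegral_ofReal hint (ae_of_all _ fun x => by positivity)]
  congr 1
  rw [integral_const_mul, integral_const_mul,
    integral_sub_right_eq_self (fun x => Real.exp (-(1/2) * x^2)) c]
  have h3 : ∫ x : ℝ, Real.exp (-(1/2) * x^2) = √(2*π) := by
    rw [integral_gaussian]
    rw [show π / (1/2 : ℝ) = 2 * π by ring]
  have h2 : √(2*π) ≠ 0 := by positivity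
  rw [h3, mul_comm (Real.exp _) (√(2*π)), inv_mul_cancel_left₀ h2]

lemma int1 {c : ℝ} (hc : c < 1) :
    ∫⁻ x, ENNReal.ofReal (Real.exp (c * x ^ 2 / 2)) ∂(gaussianReal 0 1) ≠ ⊤ := by
  rw [gaussianReal_of_var_ne_zero 0 one_ne_zero,
    lintegral_withDensity_eq_lintegral_mul _ (measurable_gaussianPDF 0 1)
      (by fun_prop)]
  have hbase : Integrable (fun x : ℝ => Real.exp (-((1-c)/2) * x^2)) :=
    integrable_exp_neg_mul_sq (by linarith)
  have hint : Integrable (fun x : ℝ => (√(2*π))⁻¹ * Real.exp (-((1-c)/2) * x^2)) :=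
    hbase.const_mul _
  have h1 : ∫⁻ x, (gaussianPDF 0 1 * fun x => ENNReal.ofReal (Real.exp (c * x ^ 2 / 2))) x
      = ∫⁻ x, ENNReal.ofReal ((√(2*π))⁻¹ * Real.exp (-((1-c)/2) * x^2)) := by
    congr 1; ext x
    rw [Pi.mul_apply, gaussianPDF, ← ENNReal.ofReal_mul (gaussianPDFReal_nonneg 0 1 x),
      gaussianPDFReal]
    push_cast
    rw [mul_one, mul_assoc, ← Real.exp_add]
    congr 2
    rw [Real.exp_eq_exp]
    ring
  rw [h1, ← ofReal_integral_eq_lintegral_ofReal hint (ae_of_all _ fun x => by positivity)]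
  exact ENNReal.ofReal_ne_top


lemma lintegral_pi_prod {n : ℕ} (μ : Measure ℝ) [SigmaFinite μ] (f : Fin n → ℝ → ℝ≥0∞)
    (hf : ∀ i, Measurable (f i)) :
    ∫⁻ x : Fin n → ℝ, ∏ i, f i (x i) ∂(Measure.pi fun _ => μ) = ∏ i, ∫⁻ x, f i x ∂μ := by
  induction n with
  | zero => simp [lintegral_const, Measure.pi_univ]
  | succ n ih =>
    have h := (measurePreserving_piFinSuccAbove (fun _ : Fin (n+1) => μ) 0).symm
    rw [← h.lintegral_comp_emb (MeasurableEquiv.measurableEmbedding _)]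
    have key : ∀ p : ℝ × (Fin n → ℝ),
        ∏ i, f i ((MeasurableEquiv.piFinSuccAbove (fun _ : Fin (n+1) => ℝ) 0).symm p i)
          = f 0 p.1 * ∏ i : Fin n, f i.succ (p.2 i) := by
      intro p
      rw [Fin.prod_univ_succ]
      simp [MeasurableEquiv.piFinSuccAbove_symm_apply, Fin.zero_succAbove]
    simp_rw [key]
    rw [lintegral_prod_mul (f := fun x => f 0 x) (g := fun y : Fin n → ℝ => ∏ i : Fin n, f i.succ (y i))
      (hf 0).aemeasurable
      (Finset.measurable_prod Finset.univ
        (fun i _ => (hf i.succ).comp (measurable_pi_apply i))).aemeasurable]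
    rw [ih (fun i => f i.succ) (fun i => hf i.succ), Fin.prod_univ_succ]

noncomputable def gpi (n : ℕ) : Measure (Fin n → ℝ) := Measure.pi fun _ => gaussianReal 0 1

instance (n : ℕ) : IsProbabilityMeasure (gpi n) := by unfold gpi; infer_instance

lemma lintegralA {n : ℕ} (a : Fin n → ℝ) :
    ∫⁻ w : Fin n → ℝ, ENNReal.ofReal (Real.exp (∑ i, a i * w i)) ∂(gpi n)
      = ENNReal.ofReal (Real.exp ((∑ i, a i ^ 2) / 2)) := by
  have h : ∀ w : Fin n → ℝ, ENNReal.ofReal (Real.exp (∑ i, a i * w i))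
      = ∏ i, ENNReal.ofReal (Real.exp (a i * w i)) := by
    intro w
    rw [Real.exp_sum, ENNReal.ofReal_prod_of_nonneg (fun i _ => (Real.exp_pos _).le)]
  simp_rw [h]
  rw [gpi, lintegral_pi_prod (gaussianReal 0 1) (fun i x => ENNReal.ofReal (Real.exp (a i * x))) (fun i => by fun_prop)]
  simp_rw [mgf1]
  rw [← ENNReal.ofReal_prod_of_nonneg (fun i _ => (Real.exp_pos _).le), ← Real.exp_sum,
    Finset.sum_div]

lemma lintegralB {n : ℕ} {c : ℝ} (hc : c < 1) :
    ∫⁻ w : Fin n → ℝ, ENNReal.ofReal (Real.exp (c * (∑ i, w i ^ 2) / 2)) ∂(gpi n) ≠ ⊤ := by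
  have h : ∀ w : Fin n → ℝ, ENNReal.ofReal (Real.exp (c * (∑ i, w i ^ 2) / 2))
      = ∏ i, ENNReal.ofReal (Real.exp (c * w i ^ 2 / 2)) := by
    intro w
    rw [← ENNReal.ofReal_prod_of_nonneg (fun i _ => (Real.exp_pos _).le), ← Real.exp_sum]
    congr 2
    rw [Finset.mul_sum, Finset.sum_div]
  simp_rw [h]
  rw [gpi, lintegral_pi_prod (gaussianReal 0 1) (fun i x => ENNReal.ofReal (Real.exp (c * x ^ 2 / 2))) (fun i => by fun_prop)]
  exact (ENNReal.prod_lt_top (fun i _ => (int1 hc).lt_top)).ne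

lemma euclid_norm_sq {n : ℕ} (x : EuclideanSpace ℝ (Fin n)) : ‖x‖ ^ 2 = ∑ i, x i ^ 2 := by
  rw [EuclideanSpace.norm_eq, Real.sq_sqrt (Finset.sum_nonneg fun i _ => sq_nonneg _)]
  simp [sq_abs]

lemma main_swap {n : ℕ} {Ω : Type*} [MeasurableSpace Ω] (P : Measure Ω) [IsProbabilityMeasure P]
    (Y : Ω → EuclideanSpace ℝ (Fin n)) (hY : AEMeasurable Y P) (s : ℝ) :
    ∫⁻ ω, ENNReal.ofReal (Real.exp (s ^ 2 * ‖Y ω‖ ^ 2 / 2)) ∂P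
      = ∫⁻ w : Fin n → ℝ, ∫⁻ ω, ENNReal.ofReal (Real.exp (∑ i, (s * Y ω i) * w i)) ∂P ∂(gpi n) := by
  have step1 : ∀ ω, ENNReal.ofReal (Real.exp (s ^ 2 * ‖Y ω‖ ^ 2 / 2))
      = ∫⁻ w : Fin n → ℝ, ENNReal.ofReal (Real.exp (∑ i, (s * Y ω i) * w i)) ∂(gpi n) := by
    intro ω
    rw [lintegralA (fun i => s * Y ω i)]
    congr 3
    rw [euclid_norm_sq, Finset.mul_sum]
    exact Finset.sum_congr rfl fun i _ => by ring
  have hYi : ∀ i, AEMeasurable (fun ω => Y ω i) P := fun i =>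
    (measurable_pi_apply i).comp_aemeasurable ((WithLp.measurable_ofLp 2 _).comp_aemeasurable hY)
  have hsum : AEMeasurable (fun p : Ω × (Fin n → ℝ) => ∑ i, (s * Y p.1 i) * p.2 i)
      (P.prod (gpi n)) :=
    Finset.aemeasurable_fun_sum _ fun i _ =>
      (aemeasurable_const.fun_mul ((hYi i).comp_fst)).fun_mul
        ((measurable_pi_apply i).comp measurable_snd).aemeasurable
  have hf : AEMeasurable
      (Function.uncurry fun (ω : Ω) (w : Fin n → ℝ) =>
        ENNReal.ofReal (Real.exp (∑ i, (s * Y ω i) * w i))) (P.prod (gpi n)) :=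
    (ENNReal.measurable_ofReal.comp Real.measurable_exp).comp_aemeasurable hsum
  simp_rw [step1]
  exact lintegral_lintegral_swap hf

/-- Let `X` be a mean-zero random vector in `ℝⁿ` with `E[exp(zᵀX)] ≤ exp(zᵀΓz/2)` for all
`z ∈ ℝⁿ` (`Γ` positive semidefinite), and let `Z ~ N(0, Γ)` (characterized by its mgf).
Then for all `0 ≤ t < ‖Γ‖_op⁻¹`, `E[exp(t‖X‖²/2)] ≤ E[exp(t‖Z‖²/2)]`. -/
theorem stmt_2 {n : ℕ}
    (Γ : Matrix (Fin n) (Fin n) ℝ) (hΓ : Γ.PosSemidef)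
    {Ω : Type*} [MeasurableSpace Ω] {P : Measure Ω} [IsProbabilityMeasure P]
    {Ω' : Type*} [MeasurableSpace Ω'] {P' : Measure Ω'} [IsProbabilityMeasure P']
    (X : Ω → EuclideanSpace ℝ (Fin n)) (Z : Ω' → EuclideanSpace ℝ (Fin n))
    (hXmeas : AEMeasurable X P) (hZmeas : AEMeasurable Z P')
    (hXint : Integrable X P) (hXmean : ∫ ω, X ω ∂P = 0)
    (hX : ∀ z : EuclideanSpace ℝ (Fin n),
      Integrable (fun ω => Real.exp ⟪z, X ω⟫) P ∧
      ∫ ω, Real.exp ⟪z, X ω⟫ ∂P ≤ Real.exp (⟪(Matrix.toEuclideanCLM (𝕜 := ℝ) Γ) z, z⟫ / 2))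
    (hZ : ∀ z : EuclideanSpace ℝ (Fin n),
      Integrable (fun ω => Real.exp ⟪z, Z ω⟫) P' ∧
      ∫ ω, Real.exp ⟪z, Z ω⟫ ∂P' = Real.exp (⟪(Matrix.toEuclideanCLM (𝕜 := ℝ) Γ) z, z⟫ / 2))
    (t : ℝ) (ht0 : 0 ≤ t) (ht : t * ‖Matrix.toEuclideanCLM (𝕜 := ℝ) Γ‖ < 1) :
    Integrable (fun ω => Real.exp (t * ‖X ω‖ ^ 2 / 2)) P ∧
    ∫ ω, Real.exp (t * ‖X ω‖ ^ 2 / 2) ∂P ≤ ∫ ω, Real.exp (t * ‖Z ω‖ ^ 2 / 2) ∂P' := by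
  set G := Matrix.toEuclideanCLM (𝕜 := ℝ) Γ with hG
  set s := Real.sqrt t with hsdef
  have hs2 : s ^ 2 = t := Real.sq_sqrt ht0
  set e : (Fin n → ℝ) → EuclideanSpace ℝ (Fin n) :=
    fun w => (WithLp.equiv 2 (Fin n → ℝ)).symm w with he
  -- inner product formula
  have hip : ∀ (w : Fin n → ℝ) (y : EuclideanSpace ℝ (Fin n)),
      (∑ i, (s * y i) * w i) = ⟪s • e w, y⟫ := by
    intro w y
    rw [PiLp.inner_apply]
    refine Finset.sum_congr rfl fun i _ => ?_
    simp [he, RCLike.inner_apply, WithLp.equiv_symm_apply, PiLp.toLp_apply]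
    ring
  -- quadratic form identity
  have hGz : ∀ w : Fin n → ℝ, ⟪G (s • e w), s • e w⟫ = t * ⟪G (e w), e w⟫ := by
    intro w
    rw [G.map_smul, real_inner_smul_left, real_inner_smul_right, ← mul_assoc, ← sq, hs2]
  -- swaps
  have hXswap := main_swap P X hXmeas s
  have hZswap := main_swap P' Z hZmeas s
  rw [hs2] at hXswap hZswap
  simp_rw [hip] at hXswap hZswap
  -- inner integrals
  have hZeq : ∀ w : Fin n → ℝ,
      ∫⁻ ω, ENNReal.ofReal (Real.exp ⟪s • e w, Z ω⟫) ∂P'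
        = ENNReal.ofReal (Real.exp (t * ⟪G (e w), e w⟫ / 2)) := by
    intro w
    rw [← ofReal_integral_eq_lintegral_ofReal (hZ (s • e w)).1
      (ae_of_all _ fun ω => (Real.exp_pos _).le), (hZ (s • e w)).2, hGz w]
  have hXle : ∀ w : Fin n → ℝ,
      ∫⁻ ω, ENNReal.ofReal (Real.exp ⟪s • e w, X ω⟫) ∂P
        ≤ ENNReal.ofReal (Real.exp (t * ⟪G (e w), e w⟫ / 2)) := by
    intro w
    rw [← ofReal_integral_eq_lintegral_ofReal (hX (s • e w)).1
      (ae_of_all _ fun ω => (Real.exp_pos _).le)]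
    refine ENNReal.ofReal_le_ofReal ?_
    have h2 := (hX (s • e w)).2
    rwa [hGz w] at h2
  -- the common middle quantity
  set M : ℝ≥0∞ := ∫⁻ w : Fin n → ℝ, ENNReal.ofReal (Real.exp (t * ⟪G (e w), e w⟫ / 2)) ∂(gpi n)
    with hM
  have hLXleM : (∫⁻ ω, ENNReal.ofReal (Real.exp (t * ‖X ω‖ ^ 2 / 2)) ∂P) ≤ M := by
    rw [hXswap]; exact lintegral_mono hXle
  have hLZeqM : (∫⁻ ω, ENNReal.ofReal (Real.exp (t * ‖Z ω‖ ^ 2 / 2)) ∂P') = M := by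
    rw [hZswap]; exact lintegral_congr hZeq
  -- finiteness of M
  have hMfin : M ≠ ⊤ := by
    have hbound : ∀ w : Fin n → ℝ,
        ENNReal.ofReal (Real.exp (t * ⟪G (e w), e w⟫ / 2))
          ≤ ENNReal.ofReal (Real.exp ((t * ‖G‖) * (∑ i, w i ^ 2) / 2)) := by
      intro w
      refine ENNReal.ofReal_le_ofReal (Real.exp_le_exp.2 ?_)
      have h1 : ⟪G (e w), e w⟫ ≤ ‖G‖ * (∑ i, w i ^ 2) := by
        have h2 := real_inner_le_norm (G (e w)) (e w)
        have h3 := G.le_opNorm (e w)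
        have h4 : ‖e w‖ ^ 2 = ∑ i, w i ^ 2 := by
          rw [euclid_norm_sq]
          exact Finset.sum_congr rfl fun i _ => by
            simp [he, WithLp.equiv_symm_apply, PiLp.toLp_apply]
        nlinarith [norm_nonneg (e w), norm_nonneg (G (e w)), norm_nonneg G]
      nlinarith [mul_le_mul_of_nonneg_left h1 ht0]
    refine ne_top_of_le_ne_top (lintegralB ?_) (lintegral_mono hbound)
    exact ht
  -- measurability and nonnegativity of the two real integrands
  have hcont : Continuous fun x : EuclideanSpace ℝ (Fin n) => Real.exp (t * ‖x‖ ^ 2 / 2) := by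
    fun_prop
  have hXsm : AEStronglyMeasurable (fun ω => Real.exp (t * ‖X ω‖ ^ 2 / 2)) P :=
    (hcont.measurable.comp_aemeasurable hXmeas).aestronglyMeasurable
  have hZsm : AEStronglyMeasurable (fun ω => Real.exp (t * ‖Z ω‖ ^ 2 / 2)) P' :=
    (hcont.measurable.comp_aemeasurable hZmeas).aestronglyMeasurable
  have hXpos : 0 ≤ᵐ[P] fun ω => Real.exp (t * ‖X ω‖ ^ 2 / 2) :=
    ae_of_all _ fun ω => (Real.exp_pos _).le
  have hZpos : 0 ≤ᵐ[P'] fun ω => Real.exp (t * ‖Z ω‖ ^ 2 / 2) :=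
    ae_of_all _ fun ω => (Real.exp_pos _).le
  constructor
  · refine ⟨hXsm, ?_⟩
    rw [hasFiniteIntegral_iff_ofReal hXpos]
    exact lt_of_le_of_lt hLXleM hMfin.lt_top
  · rw [integral_eq_lintegral_of_nonneg_ae hXpos hXsm,
      integral_eq_lintegral_of_nonneg_ae hZpos hZsm, hLZeqM]
    exact ENNReal.toReal_mono hMfin hLXleM
end

section
/- Let X be a mean-zero random variable in ℝⁿ with E[exp(zᵀX)] ≤ exp(zᵀΓz/2) for all z ∈ ℝⁿ, where Γ is positive semidefinite. Then for all 0 ≤ t < (2‖Γ‖_op)⁻¹, E[exp((t/2)(‖X‖² − tr(Γ)))] ≤ exp((t²/2)‖Γ‖²_HS). -/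
open MeasureTheory
open scoped RealInnerProductSpace

section HansonWrightAux

open Real
open scoped NNReal ENNReal

noncomputable def gd (s : ℝ) : ℝ := (Real.sqrt (2*Real.pi))⁻¹ * Real.exp (-(s^2)/2)

lemma gd_cont : Continuous gd := by unfold gd; fun_prop

lemma gd_pos (s : ℝ) : 0 < gd s := by unfold gd; positivity

lemma gauss1D_int {b : ℝ} (a : ℝ) (hb : 0 < b) :
    Integrable (fun x => Real.exp (-(b*x^2) + a*x)) := by
  have key : (fun x => Real.exp (-(b*x^2) + a*x))
      = fun x => Real.exp (a^2/(4*b)) * Real.exp (-b * (x - a/(2*b))^2) := by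
    funext x
    rw [← Real.exp_add]
    congr 1
    field_simp
    ring
  rw [key]
  exact ((integrable_exp_neg_mul_sq hb).comp_sub_right (a/(2*b))).const_mul _

lemma gauss1D_eq {b : ℝ} (a : ℝ) (hb : 0 < b) :
    ∫ x, Real.exp (-(b*x^2) + a*x) = Real.sqrt (Real.pi/b) * Real.exp (a^2/(4*b)) := by
  have key : ∀ x, Real.exp (-(b*x^2) + a*x)
      = Real.exp (a^2/(4*b)) * Real.exp (-b * (x - a/(2*b))^2) := by
    intro x
    rw [← Real.exp_add]
    congr 1
    field_simp
    ring
  simp_rw [key]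
  rw [integral_const_mul, integral_sub_right_eq_self (fun x => Real.exp (-b * x^2)) (a/(2*b)),
    integral_gaussian]
  ring

lemma gd_exp_eq (a c : ℝ) :
    (fun s => gd s * Real.exp (a*s + c*s^2))
      = fun s => (Real.sqrt (2*Real.pi))⁻¹ * Real.exp (-((1/2-c)*s^2) + a*s) := by
  funext s
  unfold gd
  rw [mul_assoc, ← Real.exp_add]
  congr 2
  ring

lemma gaussg_int {c : ℝ} (a : ℝ) (hc : c < 1/2) :
    Integrable (fun s => gd s * Real.exp (a*s + c*s^2)) := by
  rw [gd_exp_eq]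
  exact (gauss1D_int a (by linarith)).const_mul _

lemma gaussg_eq {c : ℝ} (a : ℝ) (hc : c < 1/2) :
    ∫ s, gd s * Real.exp (a*s + c*s^2)
      = (Real.sqrt (1-2*c))⁻¹ * Real.exp (a^2/(2*(1-2*c))) := by
  have hb : (0:ℝ) < 1/2 - c := by linarith
  rw [gd_exp_eq, integral_const_mul, gauss1D_eq a hb]
  have hπ : (0:ℝ) < Real.pi := Real.pi_pos
  have h1 : Real.sqrt (Real.pi/(1/2-c)) = Real.sqrt (1-2*c)⁻¹ * Real.sqrt (2*Real.pi) := by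
    rw [← Real.sqrt_mul (by rw [inv_nonneg]; linarith : (0:ℝ) ≤ (1-2*c)⁻¹)]
    rw [inv_mul_eq_div]
    congr 1
    field_simp
  rw [h1, Real.sqrt_inv]
  have h2 : a^2/(4*(1/2-c)) = a^2/(2*(1-2*c)) := by ring_nf
  rw [h2]
  have hs : Real.sqrt (2*Real.pi) ≠ 0 := by positivity
  field_simp

lemma key_ineq {x : ℝ} (h0 : 0 ≤ x) (h1 : x ≤ 1/2) :
    (Real.sqrt (1-x))⁻¹ ≤ Real.exp (x/2 + x^2/2) := by
  have hy : (0:ℝ) ≤ x + x^2 := by positivity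
  have hexp : 1 + (x+x^2) + (x+x^2)^2/2 ≤ Real.exp (x+x^2) := by
    have := Real.sum_le_exp_of_nonneg hy 3
    simp [Finset.sum_range_succ, Nat.factorial] at this
    linarith
  have hkey : Real.exp (-(x+x^2)) ≤ 1-x := by
    rw [Real.exp_neg]
    rw [inv_le_comm₀ (Real.exp_pos _) (by linarith)]
    calc (1-x)⁻¹ ≤ 1 + (x+x^2) + (x+x^2)^2/2 := by
          rw [inv_le_iff_one_le_mul₀ (by linarith)]
          nlinarith [sq_nonneg x, sq_nonneg (x*x)]
      _ ≤ _ := hexp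
  have hsq : Real.exp (-(x+x^2)/2) ≤ Real.sqrt (1-x) := by
    rw [Real.exp_half]
    exact Real.sqrt_le_sqrt hkey
  have hpos : 0 < Real.exp (-(x+x^2)/2) := Real.exp_pos _
  calc (Real.sqrt (1-x))⁻¹ ≤ (Real.exp (-(x+x^2)/2))⁻¹ := inv_anti₀ hpos hsq
    _ = Real.exp ((x+x^2)/2) := by rw [← Real.exp_neg]; ring_nf
    _ = Real.exp (x/2 + x^2/2) := by ring_nf

noncomputable def gaussE (n : ℕ) : Measure (EuclideanSpace ℝ (Fin n)) :=
  volume.withDensity (fun x => ENNReal.ofReal (∏ i, gd (x i)))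

variable {n : ℕ}

lemma gdprod_meas : Measurable fun x : EuclideanSpace ℝ (Fin n) => ∏ i, gd (x i) := by
  apply Finset.measurable_prod
  intro i _
  exact gd_cont.measurable.comp
    ((measurable_pi_apply i).comp (MeasurableEquiv.toLp 2 (Fin n → ℝ)).symm.measurable)

lemma gaussE_prod_int {h : Fin n → ℝ → ℝ}
    (hint : ∀ i, Integrable (fun s => gd s * h i s)) :
    Integrable (fun x : EuclideanSpace ℝ (Fin n) => ∏ i, h i (x i)) (gaussE n) ∧
    ∫ x, (∏ i, h i (x i)) ∂(gaussE n) = ∏ i, ∫ s, gd s * h i s := by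
  set f : EuclideanSpace ℝ (Fin n) → ℝ≥0 := fun x => Real.toNNReal (∏ i, gd (x i)) with hf
  have f_meas : Measurable f := gdprod_meas.real_toNNReal
  have hcoe : gaussE n = volume.withDensity (fun x => (f x : ENNReal)) := by
    simp only [gaussE, hf, ENNReal.ofReal]
  have hsmul : ∀ x : EuclideanSpace ℝ (Fin n),
      f x • (∏ i, h i (x i)) = ∏ i, (gd (x i) * h i (x i)) := by
    intro x
    rw [NNReal.smul_def, Real.coe_toNNReal _ (Finset.prod_nonneg fun i _ => (gd_pos _).le),
      smul_eq_mul, ← Finset.prod_mul_distrib]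
  have hvp := EuclideanSpace.volume_preserving_symm_measurableEquiv_toLp (Fin n)
  have key : Integrable (fun y : Fin n → ℝ => ∏ i, (gd (y i) * h i (y i))) :=
    Integrable.fintype_prod hint
  have Iv : Integrable (fun x : EuclideanSpace ℝ (Fin n) => ∏ i, (gd (x i) * h i (x i))) :=
    (hvp.integrable_comp_emb (MeasurableEquiv.toLp 2 (Fin n → ℝ)).symm.measurableEmbedding).2 key
  constructor
  · rw [hcoe, integrable_withDensity_iff_integrable_smul f_meas]
    simpa only [hsmul] using Iv
  · rw [hcoe, integral_withDensity_eq_integral_smul f_meas]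
    simp_rw [hsmul]
    calc ∫ x : EuclideanSpace ℝ (Fin n), ∏ i, (gd (x i) * h i (x i))
        = ∫ y : Fin n → ℝ, ∏ i, (gd (y i) * h i (y i)) :=
          hvp.integral_comp' (fun y => ∏ i, (gd (y i) * h i (y i)))
      _ = ∏ i, ∫ s, gd s * h i s := integral_fintype_prod_eq_prod (fun i s => gd s * h i s)

lemma prod_gd_radial (x : EuclideanSpace ℝ (Fin n)) :
    ∏ i, gd (x i) = ((Real.sqrt (2*Real.pi))⁻¹)^n * Real.exp (-(‖x‖^2)/2) := by
  have hn : ‖x‖^2 = ∑ i, (x i)^2 := by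
    rw [EuclideanSpace.norm_eq, Real.sq_sqrt (Finset.sum_nonneg fun i _ => by positivity)]
    simp [sq_abs]
  unfold gd
  rw [Finset.prod_mul_distrib, Finset.prod_const, ← Real.exp_sum, hn]
  congr 2
  · simp
  · rw [← Finset.sum_div, ← Finset.sum_neg_distrib]

lemma map_withDensity_equiv {α β : Type*} [MeasurableSpace α] [MeasurableSpace β]
    (e : α ≃ᵐ β) (μ : Measure α) {f : β → ℝ≥0∞} (hf : Measurable f) :
    Measure.map e (μ.withDensity (fun a => f (e a))) = (Measure.map e μ).withDensity f := by
  ext s hs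
  rw [Measure.map_apply e.measurable hs, withDensity_apply _ hs,
    withDensity_apply _ (e.measurable hs), setLIntegral_map hs hf e.measurable]

lemma gaussE_rot (e : EuclideanSpace ℝ (Fin n) ≃ₗᵢ[ℝ] EuclideanSpace ℝ (Fin n)) :
    MeasurePreserving e (gaussE n) (gaussE n) := by
  set em : EuclideanSpace ℝ (Fin n) ≃ᵐ EuclideanSpace ℝ (Fin n) :=
    e.toHomeomorph.toMeasurableEquiv with hem
  have hcoe : ⇑em = ⇑e := rfl
  refine ⟨em.measurable, ?_⟩
  have hd : Measurable fun x : EuclideanSpace ℝ (Fin n) => ENNReal.ofReal (∏ i, gd (x i)) :=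
    gdprod_meas.ennreal_ofReal
  have hradial : (fun a => ENNReal.ofReal (∏ i, gd ((em a) i)))
      = fun a : EuclideanSpace ℝ (Fin n) => ENNReal.ofReal (∏ i, gd (a i)) := by
    funext a
    rw [hcoe, prod_gd_radial, prod_gd_radial, e.norm_map]
  have key := map_withDensity_equiv em volume hd
  rw [hradial] at key
  have hvol : Measure.map (⇑em) volume = volume := by
    rw [hcoe]; exact e.measurePreserving.map_eq
  rw [hvol] at key
  rw [hcoe] at key
  simpa [gaussE] using key

lemma gaussE_exp_inner (y : EuclideanSpace ℝ (Fin n)) :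
    Integrable (fun z => Real.exp ⟪z, y⟫) (gaussE n) ∧
    ∫ z, Real.exp ⟪z, y⟫ ∂(gaussE n) = Real.exp (‖y‖^2/2) := by
  have hfun : (fun z : EuclideanSpace ℝ (Fin n) => Real.exp ⟪z, y⟫)
      = fun z => ∏ i, Real.exp (y i * z i + 0 * (z i)^2) := by
    funext z
    rw [← Real.exp_sum]
    congr 1
    simp [PiLp.inner_apply, mul_comm]
  have hint : ∀ i : Fin n, Integrable (fun s => gd s * Real.exp (y i * s + 0 * s^2)) :=
    fun i => gaussg_int (y i) (by norm_num)
  obtain ⟨hI, hE⟩ := gaussE_prod_int (h := fun i s => Real.exp (y i * s + 0 * s^2)) hint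
  rw [← hfun] at hI hE
  refine ⟨hI, ?_⟩
  rw [hE]
  have : ∀ i : Fin n, ∫ s, gd s * Real.exp (y i * s + 0 * s^2) = Real.exp ((y i)^2/2) := by
    intro i
    rw [gaussg_eq (y i) (by norm_num)]
    norm_num
  simp_rw [this, ← Real.exp_sum]
  congr 1
  rw [EuclideanSpace.norm_eq, Real.sq_sqrt (Finset.sum_nonneg fun i _ => by positivity),
    Finset.sum_div]
  simp [sq_abs]

instance gaussE_prob : IsProbabilityMeasure (gaussE n) := by
  constructor
  obtain ⟨hI, hE⟩ := gaussE_exp_inner (n := n) 0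
  simp only [inner_zero_right, Real.exp_zero, norm_zero] at hI hE
  norm_num at hE
  rwa [← ENNReal.toReal_eq_one_iff]

lemma gaussE_quad (b : OrthonormalBasis (Fin n) ℝ (EuclideanSpace ℝ (Fin n)))
    {v : Fin n → ℝ} (hv : ∀ i, v i < 1/2) :
    Integrable (fun z => Real.exp (∑ i, v i * (b.repr z i)^2)) (gaussE n) ∧
    ∫ z, Real.exp (∑ i, v i * (b.repr z i)^2) ∂(gaussE n)
      = ∏ i, (Real.sqrt (1 - 2 * v i))⁻¹ := by
  have hint : ∀ i : Fin n, Integrable (fun s => gd s * Real.exp (0*s + v i * s^2)) :=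
    fun i => gaussg_int 0 (hv i)
  obtain ⟨hI, hE⟩ := gaussE_prod_int (h := fun i s => Real.exp (0*s + v i * s^2)) hint
  have hfun : (fun w : EuclideanSpace ℝ (Fin n) => ∏ i, Real.exp (0*(w i) + v i * (w i)^2))
      = fun w => Real.exp (∑ i, v i * (w i)^2) := by
    funext w
    rw [← Real.exp_sum]
    congr 1
    simp
  rw [hfun] at hI hE
  have hmp := gaussE_rot (b.repr : EuclideanSpace ℝ (Fin n) ≃ₗᵢ[ℝ] EuclideanSpace ℝ (Fin n))
  have hemb : MeasurableEmbedding (⇑(b.repr)) :=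
    MeasurableEquiv.measurableEmbedding
      ((b.repr : EuclideanSpace ℝ (Fin n) ≃ₗᵢ[ℝ] _).toHomeomorph.toMeasurableEquiv)
  have hcomp : (fun z : EuclideanSpace ℝ (Fin n) => Real.exp (∑ i, v i * (b.repr z i)^2))
      = (fun w : EuclideanSpace ℝ (Fin n) => Real.exp (∑ i, v i * (w i)^2)) ∘ ⇑b.repr := rfl
  constructor
  · rw [hcomp, hmp.integrable_comp_emb hemb]
    exact hI
  · calc ∫ z, Real.exp (∑ i, v i * (b.repr z i)^2) ∂(gaussE n)
        = ∫ w, Real.exp (∑ i, v i * (w i)^2) ∂(gaussE n) :=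
          hmp.integral_comp hemb (fun w => Real.exp (∑ i, v i * (w i)^2))
      _ = ∏ i, ∫ s, gd s * Real.exp (0*s + v i * s^2) := hE
      _ = ∏ i, (Real.sqrt (1 - 2 * v i))⁻¹ := by
          refine Finset.prod_congr rfl fun i _ => ?_
          rw [gaussg_eq 0 (hv i)]
          norm_num

variable {Γ : Matrix (Fin n) (Fin n) ℝ}

lemma T_basis (hH : Γ.IsHermitian) (j : Fin n) :
    (Matrix.toEuclideanCLM (𝕜 := ℝ) Γ) (hH.eigenvectorBasis j)
      = hH.eigenvalues j • hH.eigenvectorBasis j := by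
  have h1 := Matrix.ofLp_toEuclideanCLM (𝕜 := ℝ) Γ (hH.eigenvectorBasis j)
  have h2 := hH.mulVec_eigenvectorBasis j
  apply WithLp.ofLp_injective
  rw [h1, WithLp.ofLp_smul]
  exact h2

lemma quad_decomp (hH : Γ.IsHermitian) (z : EuclideanSpace ℝ (Fin n)) :
    ⟪(Matrix.toEuclideanCLM (𝕜 := ℝ) Γ) z, z⟫
      = ∑ i, hH.eigenvalues i * (hH.eigenvectorBasis.repr z i)^2 := by
  set b := hH.eigenvectorBasis
  set T := Matrix.toEuclideanCLM (𝕜 := ℝ) Γ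
  have hTz : T z = ∑ i, (hH.eigenvalues i * b.repr z i) • b i := by
    conv_lhs => rw [← b.sum_repr z]
    rw [map_sum]
    refine Finset.sum_congr rfl fun i _ => ?_
    rw [_root_.map_smul, T_basis hH i, smul_smul, mul_comm]
  rw [hTz, sum_inner]
  refine Finset.sum_congr rfl fun i _ => ?_
  rw [real_inner_smul_left, ← b.repr_apply_apply z i]
  ring

lemma lam_le (hH : Γ.IsHermitian) (i : Fin n) :
    hH.eigenvalues i ≤ ‖Matrix.toEuclideanCLM (𝕜 := ℝ) Γ‖ := by
  set T := Matrix.toEuclideanCLM (𝕜 := ℝ) Γ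
  have hb : ‖hH.eigenvectorBasis i‖ = 1 := hH.eigenvectorBasis.orthonormal.1 i
  have h1 : ⟪T (hH.eigenvectorBasis i), hH.eigenvectorBasis i⟫ = hH.eigenvalues i := by
    rw [T_basis hH i, real_inner_smul_left, real_inner_self_eq_norm_sq, hb]
    ring
  calc hH.eigenvalues i = ⟪T (hH.eigenvectorBasis i), hH.eigenvectorBasis i⟫ := h1.symm
    _ ≤ ‖T (hH.eigenvectorBasis i)‖ * ‖hH.eigenvectorBasis i‖ := real_inner_le_norm _ _
    _ ≤ ‖T‖ * ‖hH.eigenvectorBasis i‖ * ‖hH.eigenvectorBasis i‖ := by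
        gcongr
        exact T.le_opNorm _
    _ = ‖T‖ := by rw [hb]; ring

lemma trace_eq_sum_lam (hH : Γ.IsHermitian) : Γ.trace = ∑ i, hH.eigenvalues i := by
  conv_lhs => rw [hH.spectral_theorem, Unitary.conjStarAlgAut_apply]
  rw [Matrix.trace_mul_cycle]
  have hu : (star (hH.eigenvectorUnitary : Matrix (Fin n) (Fin n) ℝ)) *
      (hH.eigenvectorUnitary : Matrix (Fin n) (Fin n) ℝ) = 1 :=
    Unitary.coe_star_mul_self _
  rw [hu, Matrix.one_mul, Matrix.trace_diagonal]
  simp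

lemma hs_eq_sum_lam_sq (hH : Γ.IsHermitian) :
    ∑ i, ∑ j, (Γ i j)^2 = ∑ i, (hH.eigenvalues i)^2 := by
  have hsymm : ∀ i j, Γ j i = Γ i j := by
    intro i j
    have := congrFun (congrFun hH.symm j) i
    simpa [Matrix.conjTranspose_apply] using this
  have h1 : ∑ i, ∑ j, (Γ i j)^2 = (Γ * Γ).trace := by
    rw [Matrix.trace]
    refine (Finset.sum_congr rfl fun i _ => ?_).symm
    rw [Matrix.diag_apply, Matrix.mul_apply]
    exact Finset.sum_congr rfl fun j _ => by rw [hsymm i j]; ring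
  rw [h1]
  have h2 : Γ * Γ = (hH.eigenvectorUnitary : Matrix (Fin n) (Fin n) ℝ) *
      (Matrix.diagonal (RCLike.ofReal ∘ hH.eigenvalues) * Matrix.diagonal (RCLike.ofReal ∘ hH.eigenvalues)) *
      (star (hH.eigenvectorUnitary : Matrix (Fin n) (Fin n) ℝ)) := by
    conv_lhs => rw [hH.spectral_theorem, Unitary.conjStarAlgAut_apply]
    have hu : (star (hH.eigenvectorUnitary : Matrix (Fin n) (Fin n) ℝ)) *
        (hH.eigenvectorUnitary : Matrix (Fin n) (Fin n) ℝ) = 1 :=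
      Unitary.coe_star_mul_self _
    calc ((hH.eigenvectorUnitary : Matrix (Fin n) (Fin n) ℝ) * Matrix.diagonal (RCLike.ofReal ∘ hH.eigenvalues) *
          (star (hH.eigenvectorUnitary : Matrix (Fin n) (Fin n) ℝ))) *
        ((hH.eigenvectorUnitary : Matrix (Fin n) (Fin n) ℝ) * Matrix.diagonal (RCLike.ofReal ∘ hH.eigenvalues) *
          (star (hH.eigenvectorUnitary : Matrix (Fin n) (Fin n) ℝ)))
        = (hH.eigenvectorUnitary : Matrix (Fin n) (Fin n) ℝ) * Matrix.diagonal (RCLike.ofReal ∘ hH.eigenvalues) *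
          ((star (hH.eigenvectorUnitary : Matrix (Fin n) (Fin n) ℝ)) * (hH.eigenvectorUnitary : Matrix (Fin n) (Fin n) ℝ)) *
          Matrix.diagonal (RCLike.ofReal ∘ hH.eigenvalues) * (star (hH.eigenvectorUnitary : Matrix (Fin n) (Fin n) ℝ)) := by
          simp only [Matrix.mul_assoc]
      _ = _ := by rw [hu, Matrix.mul_one]; simp only [Matrix.mul_assoc]
  rw [h2, Matrix.trace_mul_cycle]
  have hu : (star (hH.eigenvectorUnitary : Matrix (Fin n) (Fin n) ℝ)) *
      (hH.eigenvectorUnitary : Matrix (Fin n) (Fin n) ℝ) = 1 :=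
    Unitary.coe_star_mul_self _
  rw [hu, Matrix.one_mul, Matrix.diagonal_mul_diagonal, Matrix.trace_diagonal]
  simp [pow_two]

end HansonWrightAux

/-- Let `X` be a mean-zero random vector in `ℝⁿ` with `E[exp(zᵀX)] ≤ exp(zᵀΓz/2)` for all `z`,
`Γ` positive semidefinite. Then for all `0 ≤ t < (2‖Γ‖_op)⁻¹`,
`E[exp((t/2)(‖X‖² − tr Γ))] ≤ exp((t²/2)‖Γ‖²_HS)`. -/
theorem stmt_3 {n : ℕ}
    (Γ : Matrix (Fin n) (Fin n) ℝ) (hΓ : Γ.PosSemidef)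
    {Ω : Type*} [MeasurableSpace Ω] {P : Measure Ω} [IsProbabilityMeasure P]
    (X : Ω → EuclideanSpace ℝ (Fin n)) (hXmeas : AEMeasurable X P)
    (hXint : Integrable X P) (hXmean : ∫ ω, X ω ∂P = 0)
    (hX : ∀ z : EuclideanSpace ℝ (Fin n),
      Integrable (fun ω => Real.exp ⟪z, X ω⟫) P ∧
      ∫ ω, Real.exp ⟪z, X ω⟫ ∂P ≤ Real.exp (⟪(Matrix.toEuclideanCLM (𝕜 := ℝ) Γ) z, z⟫ / 2))
    (t : ℝ) (ht0 : 0 ≤ t) (ht : t * (2 * ‖Matrix.toEuclideanCLM (𝕜 := ℝ) Γ‖) < 1) :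
    Integrable (fun ω => Real.exp (t / 2 * (‖X ω‖ ^ 2 - Γ.trace))) P ∧
    ∫ ω, Real.exp (t / 2 * (‖X ω‖ ^ 2 - Γ.trace)) ∂P ≤
      Real.exp (t ^ 2 / 2 * (∑ i, ∑ j, (Γ i j) ^ 2)) := by
  classical
  set T := Matrix.toEuclideanCLM (𝕜 := ℝ) Γ with hT
  have hH : Γ.IsHermitian := hΓ.1
  set lam := hH.eigenvalues with hlamdef
  set b := hH.eigenvectorBasis with hbdef
  set s := Real.sqrt t with hsdef
  have hs2 : s^2 = t := Real.sq_sqrt ht0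
  have hs0 : 0 ≤ s := Real.sqrt_nonneg t
  have htop : t * ‖T‖ < 1/2 := by linarith
  have hlam0 : ∀ i, 0 ≤ lam i := fun i => hΓ.eigenvalues_nonneg i
  have hlam : ∀ i, t * lam i < 1/2 := by
    intro i
    calc t * lam i ≤ t * ‖T‖ := mul_le_mul_of_nonneg_left (lam_le hH i) ht0
      _ < 1/2 := htop
  -- the quadratic Gaussian integral
  have hv : ∀ i, t/2 * lam i < 1/2 := by
    intro i
    have := hlam i
    have h0 := mul_nonneg ht0 (hlam0 i)
    nlinarith
  obtain ⟨QI, QE⟩ := gaussE_quad b (v := fun i => t/2 * lam i) hv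
  set S := ∑ i, (lam i)^2 with hSdef
  set C := Real.exp (t/2 * Γ.trace + t^2/2 * S) with hCdef
  have hQbound : ∫ z, Real.exp (∑ i, (t/2 * lam i) * (b.repr z i)^2) ∂(gaussE n) ≤ C := by
    rw [QE]
    have hterm : ∀ i : Fin n, (Real.sqrt (1 - 2 * (t/2 * lam i)))⁻¹
        ≤ Real.exp ((t * lam i)/2 + (t * lam i)^2/2) := by
      intro i
      have h1 : 1 - 2 * (t/2 * lam i) = 1 - t * lam i := by ring
      rw [h1]
      exact key_ineq (mul_nonneg ht0 (hlam0 i)) (hlam i).le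
    calc ∏ i, (Real.sqrt (1 - 2 * (t/2 * lam i)))⁻¹
        ≤ ∏ i, Real.exp ((t * lam i)/2 + (t * lam i)^2/2) := by
          refine Finset.prod_le_prod (fun i _ => by positivity) fun i _ => hterm i
      _ = Real.exp (∑ i, ((t * lam i)/2 + (t * lam i)^2/2)) := (Real.exp_sum _ _).symm
      _ = C := by
          rw [hCdef]
          congr 1
          rw [trace_eq_sum_lam hH, hSdef, Finset.sum_add_distrib, Finset.mul_sum, Finset.mul_sum]
          congr 1
          · exact Finset.sum_congr rfl fun i _ => by ring
          · exact Finset.sum_congr rfl fun i _ => by ring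
  -- pointwise inner-product Gaussian integral (Step A)
  set G : Ω → ℝ := fun ω => Real.exp (t/2 * ‖X ω‖^2) with hGdef
  have claimA : ∀ ω, ∫⁻ z, ENNReal.ofReal (Real.exp ⟪z, s • X ω⟫) ∂(gaussE n)
      = ENNReal.ofReal (G ω) := by
    intro ω
    obtain ⟨I1, E1⟩ := gaussE_exp_inner (s • X ω)
    rw [← ofReal_integral_eq_lintegral_ofReal I1 (ae_of_all _ fun z => (Real.exp_pos _).le), E1]
    congr 1
    rw [hGdef]
    congr 1
    rw [norm_smul, Real.norm_eq_abs, abs_of_nonneg hs0, mul_pow, hs2]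
    ring
  -- the sub-Gaussian bound (Step B)
  have claimB : ∀ z : EuclideanSpace ℝ (Fin n),
      ∫⁻ ω, ENNReal.ofReal (Real.exp ⟪z, s • X ω⟫) ∂P
        ≤ ENNReal.ofReal (Real.exp (t/2 * ⟪T z, z⟫)) := by
    intro z
    have h1 : ∀ ω, ⟪z, s • X ω⟫ = ⟪s • z, X ω⟫ := by
      intro ω
      rw [real_inner_smul_right, real_inner_smul_left]
    obtain ⟨hXi, hXb⟩ := hX (s • z)
    simp_rw [h1]
    rw [← ofReal_integral_eq_lintegral_ofReal hXi (ae_of_all _ fun ω => (Real.exp_pos _).le)]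
    refine ENNReal.ofReal_le_ofReal (le_trans hXb ?_)
    have h2 : ⟪T (s • z), s • z⟫ = t * ⟪T z, z⟫ := by
      rw [_root_.map_smul, real_inner_smul_left, real_inner_smul_right, ← mul_assoc, ← pow_two, hs2]
    rw [h2]
    exact le_of_eq (by congr 1; ring)
  -- Step C in lintegral form
  have claimC : ∫⁻ z, ENNReal.ofReal (Real.exp (t/2 * ⟪T z, z⟫)) ∂(gaussE n)
      ≤ ENNReal.ofReal C := by
    have heq : ∀ z : EuclideanSpace ℝ (Fin n),
        Real.exp (t/2 * ⟪T z, z⟫) = Real.exp (∑ i, (t/2 * lam i) * (b.repr z i)^2) := by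
      intro z
      congr 1
      rw [quad_decomp hH z, Finset.mul_sum]
      exact Finset.sum_congr rfl fun i _ => by ring
    simp_rw [heq]
    rw [← ofReal_integral_eq_lintegral_ofReal QI (ae_of_all _ fun z => (Real.exp_pos _).le)]
    exact ENNReal.ofReal_le_ofReal hQbound
  -- joint measurability
  have claimM : AEMeasurable
      (Function.uncurry fun ω z => ENNReal.ofReal (Real.exp ⟪z, s • X (ω : Ω)⟫))
      (P.prod (gaussE n)) := by
    have hX1 : AEMeasurable (fun p : Ω × EuclideanSpace ℝ (Fin n) => X p.1) (P.prod (gaussE n)) :=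
      hXmeas.comp_quasiMeasurePreserving MeasureTheory.Measure.quasiMeasurePreserving_fst
    have hpair : AEMeasurable (fun p : Ω × EuclideanSpace ℝ (Fin n) =>
        (p.2, s • X p.1)) (P.prod (gaussE n)) :=
      measurable_snd.aemeasurable.prodMk (hX1.const_smul s)
    have hinner : AEMeasurable (fun p : Ω × EuclideanSpace ℝ (Fin n) =>
        ⟪p.2, s • X p.1⟫) (P.prod (gaussE n)) := by
      have hcompi : (fun p : Ω × EuclideanSpace ℝ (Fin n) => ⟪p.2, s • X p.1⟫)
          = (fun q : EuclideanSpace ℝ (Fin n) × EuclideanSpace ℝ (Fin n) => ⟪q.1, q.2⟫)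
            ∘ (fun p : Ω × EuclideanSpace ℝ (Fin n) => (p.2, s • X p.1)) := rfl
      rw [hcompi]
      exact (continuous_inner (𝕜 := ℝ)
        (E := EuclideanSpace ℝ (Fin n))).measurable.comp_aemeasurable hpair
    exact (Real.measurable_exp.comp_aemeasurable hinner).ennreal_ofReal
  -- main lintegral chain
  have h_main : ∫⁻ ω, ENNReal.ofReal (G ω) ∂P ≤ ENNReal.ofReal C := by
    calc ∫⁻ ω, ENNReal.ofReal (G ω) ∂P
        = ∫⁻ ω, ∫⁻ z, ENNReal.ofReal (Real.exp ⟪z, s • X ω⟫) ∂(gaussE n) ∂P :=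
          lintegral_congr fun ω => (claimA ω).symm
      _ = ∫⁻ z, ∫⁻ ω, ENNReal.ofReal (Real.exp ⟪z, s • X ω⟫) ∂P ∂(gaussE n) :=
          lintegral_lintegral_swap claimM
      _ ≤ ∫⁻ z, ENNReal.ofReal (Real.exp (t/2 * ⟪T z, z⟫)) ∂(gaussE n) :=
          lintegral_mono fun z => claimB z
      _ ≤ ENNReal.ofReal C := claimC
  -- integrability of G
  have hGmeas : AEMeasurable G P := by
    have h1 : AEMeasurable (fun ω => ‖X ω‖^2) P := (hXmeas.norm.pow_const 2)
    exact Real.measurable_exp.comp_aemeasurable (h1.const_mul (t/2))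
  have hGint : Integrable G P := by
    refine ⟨hGmeas.aestronglyMeasurable, ?_⟩
    rw [HasFiniteIntegral]
    have heq : ∀ ω, (‖G ω‖₊ : ENNReal) = ENNReal.ofReal (G ω) := fun ω =>
      Real.enorm_eq_ofReal (Real.exp_pos _).le
    calc ∫⁻ ω, (‖G ω‖₊ : ENNReal) ∂P = ∫⁻ ω, ENNReal.ofReal (G ω) ∂P :=
          lintegral_congr fun ω => heq ω
      _ ≤ ENNReal.ofReal C := h_main
      _ < ⊤ := ENNReal.ofReal_lt_top
  have hGle : ∫ ω, G ω ∂P ≤ C := by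
    have h1 : ENNReal.ofReal (∫ ω, G ω ∂P) ≤ ENNReal.ofReal C := by
      rw [ofReal_integral_eq_lintegral_ofReal hGint (ae_of_all _ fun ω => (Real.exp_pos _).le)]
      exact h_main
    have hC0 : 0 ≤ C := Real.exp_nonneg _
    exact (ENNReal.ofReal_le_ofReal_iff hC0).1 h1
  -- conclusion
  have hsplit : (fun ω => Real.exp (t / 2 * (‖X ω‖ ^ 2 - Γ.trace)))
      = fun ω => Real.exp (-(t/2) * Γ.trace) * G ω := by
    funext ω
    rw [hGdef, ← Real.exp_add]
    congr 1
    ring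
  constructor
  · rw [hsplit]
    exact hGint.const_mul _
  · rw [hsplit, integral_const_mul]
    calc Real.exp (-(t/2) * Γ.trace) * ∫ ω, G ω ∂P
        ≤ Real.exp (-(t/2) * Γ.trace) * C :=
          mul_le_mul_of_nonneg_left hGle (Real.exp_nonneg _)
      _ = Real.exp (t ^ 2 / 2 * S) := by
          rw [hCdef, ← Real.exp_add]
          congr 1
          ring
      _ = Real.exp (t ^ 2 / 2 * (∑ i, ∑ j, (Γ i j) ^ 2)) := by
          rw [hSdef, hs_eq_sum_lam_sq hH]
end

section
/- Let Γ be a positive definite trace class operator on a real separable Hilbert space H and X a centered sub-gaussian random variable in H with respect to Γ. Then there is a universal constant C > 0 such that the ψ₁ (sub-exponential) norm of ‖X‖² satisfies ‖‖X‖²‖_{ψ₁} ≤ C‖X‖²_{ψ₂}‖Γ‖_tr; in particular, ‖X‖² is a real-valued sub-exponential random variable. -/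
open MeasureTheory
open scoped RealInnerProductSpace

open Real in
lemma aux1_subg {Ω : Type} [MeasurableSpace Ω] (P : Measure Ω) [IsProbabilityMeasure P]
    {Y : Ω → ℝ} (hY : AEMeasurable Y P) {v : ℝ} (hv : 0 < v)
    (hint : ∀ t : ℝ, Integrable (fun ω => Real.exp (t * Y ω)) P)
    (hmgf : ∀ t : ℝ, ∫ ω, Real.exp (t * Y ω) ∂P ≤ Real.exp (t ^ 2 * v / 2)) :
    ∫⁻ ω, ENNReal.ofReal (Real.exp (Y ω ^ 2 / (4 * v))) ∂P ≤ ENNReal.ofReal (Real.sqrt 2) := by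
  have hπ : (0:ℝ) < π := Real.pi_pos
  -- pointwise Gaussian identity
  have hfun : ∀ y : ℝ, (fun s : ℝ => Real.exp (s * y - v * s ^ 2))
      = fun s => Real.exp (y ^ 2 / (4 * v)) * Real.exp (-v * (s - y / (2 * v)) ^ 2) := by
    intro y
    funext s
    rw [← Real.exp_add]
    congr 1
    field_simp
    ring
  have hInt : ∀ y : ℝ, Integrable (fun s : ℝ => Real.exp (s * y - v * s ^ 2)) := by
    intro y
    rw [hfun y]
    exact ((integrable_exp_neg_mul_sq hv).comp_sub_right (y / (2 * v))).const_mul _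
  have hId : ∀ y : ℝ, ENNReal.ofReal (Real.exp (y ^ 2 / (4 * v)))
      = ENNReal.ofReal (Real.sqrt (v / π)) *
        ∫⁻ s : ℝ, ENNReal.ofReal (Real.exp (s * y - v * s ^ 2)) := by
    intro y
    rw [← ofReal_integral_eq_lintegral_ofReal (hInt y)
      (Filter.Eventually.of_forall fun s => (Real.exp_pos _).le)]
    have h1 : ∫ s : ℝ, Real.exp (s * y - v * s ^ 2)
        = Real.exp (y ^ 2 / (4 * v)) * Real.sqrt (π / v) := by
      rw [hfun y, integral_const_mul]
      congr 1
      have := integral_sub_right_eq_self (μ := volume) (fun s : ℝ => Real.exp (-v * s ^ 2)) (y / (2 * v))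
      rw [this, integral_gaussian]
    rw [h1, ← ENNReal.ofReal_mul (Real.sqrt_nonneg _)]
    congr 1
    rw [← mul_assoc, mul_comm (Real.sqrt (v / π)), mul_assoc, ← Real.sqrt_mul (by positivity)]
    have : v / π * (π / v) = 1 := by field_simp
    rw [this, Real.sqrt_one, mul_one]
  -- measurability on product
  have hY' : AEMeasurable (fun p : Ω × ℝ => Y p.1) (P.prod volume) :=
    hY.comp_quasiMeasurePreserving MeasureTheory.Measure.quasiMeasurePreserving_fst
  have hprod : AEMeasurable (Function.uncurry fun ω (s : ℝ) =>
      ENNReal.ofReal (Real.exp (s * Y ω - v * s ^ 2))) (P.prod volume) := by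
    have h2 : AEMeasurable (fun p : Ω × ℝ => p.2 * Y p.1 - v * p.2 ^ 2) (P.prod volume) := by
      exact (measurable_snd.aemeasurable.mul hY').sub
        (((measurable_snd.pow measurable_const).const_mul v).aemeasurable)
    exact (ENNReal.measurable_ofReal.comp Real.measurable_exp).comp_aemeasurable h2
  calc ∫⁻ ω, ENNReal.ofReal (Real.exp (Y ω ^ 2 / (4 * v))) ∂P
      = ∫⁻ ω, ENNReal.ofReal (Real.sqrt (v / π)) *
          ∫⁻ s : ℝ, ENNReal.ofReal (Real.exp (s * Y ω - v * s ^ 2)) ∂(volume) ∂P :=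
        lintegral_congr fun ω => hId (Y ω)
    _ = ENNReal.ofReal (Real.sqrt (v / π)) *
          ∫⁻ ω, ∫⁻ s : ℝ, ENNReal.ofReal (Real.exp (s * Y ω - v * s ^ 2)) ∂(volume) ∂P :=
        lintegral_const_mul' _ _ ENNReal.ofReal_ne_top
    _ = ENNReal.ofReal (Real.sqrt (v / π)) *
          ∫⁻ s : ℝ, ∫⁻ ω, ENNReal.ofReal (Real.exp (s * Y ω - v * s ^ 2)) ∂P := by
        rw [lintegral_lintegral_swap hprod]
    _ ≤ ENNReal.ofReal (Real.sqrt (v / π)) *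
          ∫⁻ s : ℝ, ENNReal.ofReal (Real.exp (-(v / 2) * s ^ 2)) := by
        refine mul_le_mul_right (lintegral_mono fun s => ?_) _
        calc ∫⁻ ω, ENNReal.ofReal (Real.exp (s * Y ω - v * s ^ 2)) ∂P
            = ∫⁻ ω, ENNReal.ofReal (Real.exp (s * Y ω)) * ENNReal.ofReal (Real.exp (-(v * s ^ 2))) ∂P := by
              refine lintegral_congr fun ω => ?_
              rw [← ENNReal.ofReal_mul (Real.exp_pos _).le, ← Real.exp_add]
              ring_nf
          _ = (∫⁻ ω, ENNReal.ofReal (Real.exp (s * Y ω)) ∂P) *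
                ENNReal.ofReal (Real.exp (-(v * s ^ 2))) :=
              lintegral_mul_const' _ _ ENNReal.ofReal_ne_top
          _ ≤ ENNReal.ofReal (Real.exp (s ^ 2 * v / 2)) *
                ENNReal.ofReal (Real.exp (-(v * s ^ 2))) := by
              refine mul_le_mul_left ?_ _
              rw [← ofReal_integral_eq_lintegral_ofReal (hint s)
                (Filter.Eventually.of_forall fun ω => (Real.exp_pos _).le)]
              exact ENNReal.ofReal_le_ofReal (hmgf s)
          _ = ENNReal.ofReal (Real.exp (-(v / 2) * s ^ 2)) := by
              rw [← ENNReal.ofReal_mul (Real.exp_pos _).le, ← Real.exp_add]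
              congr 2
              ring
    _ = ENNReal.ofReal (Real.sqrt (v / π)) * ENNReal.ofReal (Real.sqrt (π / (v / 2))) := by
        congr 1
        rw [← ofReal_integral_eq_lintegral_ofReal (integrable_exp_neg_mul_sq (by positivity))
          (Filter.Eventually.of_forall fun s => (Real.exp_pos _).le), integral_gaussian]
    _ = ENNReal.ofReal (Real.sqrt 2) := by
        rw [← ENNReal.ofReal_mul (Real.sqrt_nonneg _), ← Real.sqrt_mul (by positivity)]
        congr 2
        field_simp

lemma aux_prod_rpow {ι : Type} (s : Finset ι) (a : ENNReal) (ha : a ≠ 0) (ha' : a ≠ ⊤) (q : ι → ℝ) :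
    ∏ i ∈ s, a ^ q i = a ^ (∑ i ∈ s, q i) := by
  classical
  induction s using Finset.induction with
  | empty => simp
  | insert a s h ih =>
    rw [Finset.prod_insert h, Finset.sum_insert h, ENNReal.rpow_add _ _ ha ha', ih]

lemma aux_countable {H ι : Type} [NormedAddCommGroup H] [InnerProductSpace ℝ H]
    [TopologicalSpace.SeparableSpace H] (b : HilbertBasis ι ℝ H) : Countable ι := by
  obtain ⟨D, hDc, hDd⟩ := TopologicalSpace.exists_countable_dense H
  have hchoice : ∀ i : ι, ∃ d ∈ D, dist (b i) d < 1 / 2 := by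
    intro i
    have := Metric.mem_closure_iff.mp (by rw [hDd.closure_eq]; trivial :
      (b i : H) ∈ closure D)
    exact this (1 / 2) (by norm_num)
  choose f hfD hfd using hchoice
  have hdist : ∀ i j : ι, i ≠ j → 1 < dist (b i : H) (b j) := by
    intro i j hij
    have h1 : ‖(b i : H)‖ = 1 := b.orthonormal.1 i
    have h2 : ‖(b j : H)‖ = 1 := b.orthonormal.1 j
    have h3 : ⟪(b i : H), b j⟫ = 0 := b.orthonormal.2 hij
    have h4 : ‖(b i : H) - b j‖ ^ 2 = 2 := by
      rw [norm_sub_sq_real, h1, h2, h3]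
      norm_num
    rw [dist_eq_norm]
    nlinarith [norm_nonneg ((b i : H) - b j)]
  have hinj : Function.Injective fun i => (⟨f i, hfD i⟩ : D) := by
    intro i j hij
    by_contra hne
    have h1 := hfd i
    have h2 := hfd j
    have heq : f i = f j := congrArg Subtype.val hij
    have := hdist i j hne
    have hd : dist (b i : H) (b j) ≤ dist (b i : H) (f i) + dist (f j) (b j : H) := by
      rw [heq]; exact dist_triangle _ _ _
    rw [dist_comm (f j)] at hd
    linarith
  have : Countable D := hDc.to_subtype
  exact Function.Injective.countable hinj

lemma aux_zero {Ω : Type} [MeasurableSpace Ω] (P : Measure Ω) [IsProbabilityMeasure P]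
    {Y : Ω → ℝ}
    (h1 : Integrable (fun ω => Real.exp (Y ω)) P) (h1' : ∫ ω, Real.exp (Y ω) ∂P ≤ 1)
    (h2 : Integrable (fun ω => Real.exp (-Y ω)) P) (h2' : ∫ ω, Real.exp (-Y ω) ∂P ≤ 1) :
    ∀ᵐ ω ∂P, Y ω = 0 := by
  set g : Ω → ℝ := fun ω => Real.exp (Y ω) + Real.exp (-Y ω) - 2 with hg
  have hgint : Integrable g P := (h1.add h2).sub (integrable_const 2)
  have hgnn : 0 ≤ g := by
    intro ω
    have a1 := Real.add_one_le_exp (Y ω)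
    have a2 := Real.add_one_le_exp (-Y ω)
    simp only [hg, Pi.zero_apply]
    linarith
  have hadd : Integrable (fun ω => Real.exp (Y ω) + Real.exp (-Y ω)) P := h1.add h2
  have hgle : ∫ ω, g ω ∂P ≤ 0 := by
    have e1 : ∫ ω, g ω ∂P = ∫ ω, (Real.exp (Y ω) + Real.exp (-Y ω)) - 2 ∂P := rfl
    rw [e1, integral_sub hadd (integrable_const 2), integral_add h1 h2, integral_const]
    simp only [measure_univ, ENNReal.toReal_one, probReal_univ, smul_eq_mul, one_mul]
    linarith
  have hgzero : ∀ᵐ ω ∂P, g ω = 0 := by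
    have : ∫ ω, g ω ∂P = 0 := le_antisymm hgle (integral_nonneg hgnn)
    exact (integral_eq_zero_iff_of_nonneg hgnn hgint).mp this
  filter_upwards [hgzero] with ω hω
  by_contra hne
  have a1 := Real.add_one_lt_exp hne
  have a2 := Real.add_one_lt_exp (neg_ne_zero.mpr hne)
  simp only [hg] at hω
  linarith

/-- Let `Γ` be a positive definite trace class operator on a real separable Hilbert space `H`
and `X` a centered sub-gaussian random variable in `H` w.r.t. `Γ`. Then there is a universal
constant `C > 0` with `‖‖X‖²‖_{ψ₁} ≤ C ‖X‖²_{ψ₂} ‖Γ‖_tr`; the ψ₁-norm bound is expressed by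
the standard Orlicz criterion `E[exp(‖X‖² / (C L² ‖Γ‖_tr))] ≤ 2`, so `‖X‖²` is
sub-exponential. -/
theorem stmt_6 :
    ∃ C : ℝ, 0 < C ∧
      ∀ (H : Type) (_ : NormedAddCommGroup H) (_ : InnerProductSpace ℝ H)
        (_ : CompleteSpace H) (_ : TopologicalSpace.SeparableSpace H)
        (_ : MeasurableSpace H) (_ : BorelSpace H)
        (Ω : Type) (_ : MeasurableSpace Ω) (P : Measure Ω) (_ : IsProbabilityMeasure P)
        (Γ : H →L[ℝ] H) (_ : IsSelfAdjoint Γ) (_ : ∀ z : H, 0 ≤ ⟪Γ z, z⟫)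
        (ι : Type) (b : HilbertBasis ι ℝ H)
        (_ : Summable (fun i => ⟪Γ (b i), b i⟫))
        (X : Ω → H) (_ : AEMeasurable X P)
        (L : ℝ) (_ : 0 < L)
        (_ : ∀ z : H, Integrable (fun ω => Real.exp ⟪z, X ω⟫) P ∧
          ∫ ω, Real.exp ⟪z, X ω⟫ ∂P ≤ Real.exp (L ^ 2 * ⟪Γ z, z⟫ / 2)),
        Integrable (fun ω =>
          Real.exp (‖X ω‖ ^ 2 / (C * L ^ 2 * ∑' i, ⟪Γ (b i), b i⟫))) P ∧
        ∫ ω, Real.exp (‖X ω‖ ^ 2 / (C * L ^ 2 * ∑' i, ⟪Γ (b i), b i⟫)) ∂P ≤ 2 := by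
  classical
  refine ⟨4, by norm_num, ?_⟩
  intro H _ _ _ _ _ _ Ω _ P _ Γ hΓsa hΓpos ι b hsum X hX L hL hsub
  set γ : ι → ℝ := fun i => ⟪Γ (b i), b i⟫ with hγdef
  have hγ0 : ∀ i, 0 ≤ γ i := fun i => hΓpos (b i)
  set T : ℝ := ∑' i, γ i with hTdef
  by_cases hT : T = 0
  · simp only [hT, mul_zero, div_zero, Real.exp_zero]
    refine ⟨integrable_const 1, ?_⟩
    rw [integral_const]
    simp
  have hTpos : 0 < T := lt_of_le_of_ne (tsum_nonneg hγ0) (Ne.symm hT)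
  set D : ℝ := 4 * L ^ 2 * T with hDdef
  have hDpos : 0 < D := by positivity
  set Y : ι → Ω → ℝ := fun i ω => ⟪(b i : H), X ω⟫ with hYdef
  have hYmeas : ∀ i, AEMeasurable (Y i) P := fun i => aemeasurable_const.inner hX
  have hz : ∀ (i : ι) (t : ℝ),
      (fun ω => Real.exp ⟪t • (b i : H), X ω⟫) = fun ω => Real.exp (t * Y i ω) := by
    intro i t
    funext ω
    rw [real_inner_smul_left]
  have hΓsmul : ∀ (i : ι) (t : ℝ), ⟪Γ (t • (b i : H)), t • (b i : H)⟫ = t ^ 2 * γ i := by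
    intro i t
    rw [Γ.map_smul, real_inner_smul_left, real_inner_smul_right]
    ring
  have hkey : ∀ (i : ι) (t : ℝ), Integrable (fun ω => Real.exp (t * Y i ω)) P ∧
      ∫ ω, Real.exp (t * Y i ω) ∂P ≤ Real.exp (t ^ 2 * (L ^ 2 * γ i) / 2) := by
    intro i t
    have h := hsub (t • (b i : H))
    rw [hz i t] at h
    refine ⟨h.1, h.2.trans (le_of_eq ?_)⟩
    rw [hΓsmul i t]
    ring_nf
  have hzero : ∀ i, γ i = 0 → ∀ᵐ ω ∂P, Y i ω = 0 := by
    intro i hγi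
    have k1 := hkey i 1
    have k2 := hkey i (-1)
    simp only [one_mul, neg_mul, hγi, mul_zero, zero_div, Real.exp_zero, one_pow, neg_one_sq,
      mul_zero, zero_div] at k1 k2
    exact aux_zero P k1.1 k1.2 k2.1 k2.2
  have hbound : ∀ i, γ i ≠ 0 →
      ∫⁻ ω, ENNReal.ofReal (Real.exp (Y i ω ^ 2 / (4 * (L ^ 2 * γ i)))) ∂P ≤
        ENNReal.ofReal (Real.sqrt 2) := by
    intro i hγi
    have hγpos : 0 < γ i := lt_of_le_of_ne (hγ0 i) (Ne.symm hγi)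
    exact aux1_subg P (hYmeas i) (by positivity) (fun t => (hkey i t).1) (fun t => (hkey i t).2)
  haveI : Countable ι := aux_countable b
  obtain ⟨d, hd⟩ := exists_injective_nat ι
  set sn : ℕ → Finset ι := fun n => (Finset.range n).preimage d hd.injOn with hsndef
  have hsn_mem : ∀ n i, i ∈ sn n ↔ d i < n := by
    intro n i
    simp [hsndef, Finset.mem_preimage]
  have hsn_mono : Monotone sn := by
    intro m n hmn i hi
    rw [hsn_mem] at hi ⊢
    omega
  have hsn_tendsto : Filter.Tendsto sn Filter.atTop Filter.atTop :=
    Filter.tendsto_atTop_finset_of_monotone hsn_mono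
      (fun i => ⟨d i + 1, by rw [hsn_mem]; omega⟩)
  have hPar : ∀ ω : Ω, HasSum (fun i => Y i ω ^ 2) (‖X ω‖ ^ 2) := by
    intro ω
    have h := b.hasSum_inner_mul_inner (X ω) (X ω)
    rw [real_inner_self_eq_norm_sq] at h
    have he : (fun i => ⟪X ω, (b i : H)⟫ * ⟪(b i : H), X ω⟫) = fun i => Y i ω ^ 2 := by
      funext i
      have hc : ⟪X ω, (b i : H)⟫ = Y i ω := real_inner_comm _ _
      show ⟪X ω, (b i : H)⟫ * ⟪(b i : H), X ω⟫ = Y i ω ^ 2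
      rw [hc, sq]
    rwa [he] at h
  set G : ℕ → Ω → ENNReal :=
    fun n ω => ENNReal.ofReal (Real.exp ((∑ i ∈ sn n, Y i ω ^ 2) / D)) with hGdef
  have hGmeas : ∀ n, AEMeasurable (G n) P := by
    intro n
    apply ENNReal.measurable_ofReal.comp_aemeasurable
    apply Real.measurable_exp.comp_aemeasurable
    exact (Finset.aemeasurable_fun_sum _ fun i _ => (hYmeas i).pow aemeasurable_const).div_const _
  have hGmono : ∀ ω, Monotone fun n => G n ω := by
    intro ω m n hmn
    apply ENNReal.ofReal_le_ofReal
    apply Real.exp_le_exp.mpr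
    have hnum : (∑ i ∈ sn m, Y i ω ^ 2) ≤ ∑ i ∈ sn n, Y i ω ^ 2 :=
      Finset.sum_le_sum_of_subset_of_nonneg (hsn_mono hmn) fun i _ _ => sq_nonneg _
    exact (div_le_div_iff_of_pos_right hDpos).mpr hnum
  have hGlim : ∀ ω, Filter.Tendsto (fun n => G n ω) Filter.atTop
      (nhds (ENNReal.ofReal (Real.exp (‖X ω‖ ^ 2 / D)))) := by
    intro ω
    have h1 : Filter.Tendsto (fun n => ∑ i ∈ sn n, Y i ω ^ 2) Filter.atTop
        (nhds (‖X ω‖ ^ 2)) := (hPar ω).comp hsn_tendsto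
    exact (ENNReal.continuous_ofReal.tendsto _).comp
      ((Real.continuous_exp.tendsto _).comp (h1.div_const D))
  have hsup : ∀ ω, (⨆ n, G n ω) = ENNReal.ofReal (Real.exp (‖X ω‖ ^ 2 / D)) := fun ω =>
    tendsto_nhds_unique (tendsto_atTop_iSup (hGmono ω)) (hGlim ω)
  -- the per-n bound
  have hGn : ∀ n, ∫⁻ ω, G n ω ∂P ≤ ENNReal.ofReal (Real.sqrt 2) := by
    intro n
    set s : Finset ι := (sn n).filter (fun i => γ i ≠ 0) with hsdef
    have h0 : ∀ᵐ ω ∂P, ∀ j : {i : ι // γ i = 0}, Y j ω = 0 :=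
      (ae_all_iff).mpr fun j => hzero j j.2
    have hae : ∀ᵐ ω ∂P,
        G n ω = ENNReal.ofReal (Real.exp ((∑ i ∈ s, Y i ω ^ 2) / D)) := by
      filter_upwards [h0] with ω hω
      have : (∑ i ∈ s, Y i ω ^ 2) = ∑ i ∈ sn n, Y i ω ^ 2 := by
        refine Finset.sum_subset (Finset.filter_subset _ _) ?_
        intro i hi hns
        have hγi : γ i = 0 := by
          by_contra hcon
          exact hns (Finset.mem_filter.mpr ⟨hi, hcon⟩)
        rw [hω ⟨i, hγi⟩]
        norm_num
      rw [hGdef]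
      simp only
      rw [this]
    rw [lintegral_congr_ae hae]
    rcases Finset.eq_empty_or_nonempty s with hs | hs
    · rw [hs]
      simp only [Finset.sum_empty, zero_div, Real.exp_zero, ENNReal.ofReal_one]
      rw [lintegral_const]
      simp only [measure_univ, mul_one]
      exact ENNReal.one_le_ofReal.mpr (Real.one_le_sqrt.mpr (by norm_num))
    · have hγpos : ∀ i ∈ s, 0 < γ i := fun i hi =>
        lt_of_le_of_ne (hγ0 i) (Ne.symm (Finset.mem_filter.mp hi).2)
      set Ts : ℝ := ∑ i ∈ s, γ i with hTsdef
      have hTspos : 0 < Ts := Finset.sum_pos hγpos hs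
      have hTsT : Ts ≤ T := by
        rw [hTdef]
        exact Summable.sum_le_tsum s (fun i _ => hγ0 i) hsum
      set q : ι → ℝ := fun i => γ i / Ts with hqdef
      have hq0 : ∀ i ∈ s, 0 ≤ q i := fun i hi => div_nonneg (hγ0 i) hTspos.le
      have hq1 : ∑ i ∈ s, q i = 1 := by
        rw [hqdef]
        rw [← Finset.sum_div]
        exact div_self hTspos.ne'
      set f : ι → Ω → ENNReal :=
        fun i ω => ENNReal.ofReal (Real.exp (Y i ω ^ 2 / (4 * (L ^ 2 * γ i)))) with hfdef
      have hfmeas : ∀ i ∈ s, AEMeasurable (f i) P := fun i _ =>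
        ENNReal.measurable_ofReal.comp_aemeasurable
          (Real.measurable_exp.comp_aemeasurable
            (((hYmeas i).pow aemeasurable_const).div_const _))
      have hpt : ∀ ω, ENNReal.ofReal (Real.exp ((∑ i ∈ s, Y i ω ^ 2) / D)) ≤
          ∏ i ∈ s, f i ω ^ q i := by
        intro ω
        have hprod : ∏ i ∈ s, f i ω ^ q i = ENNReal.ofReal
            (Real.exp (∑ i ∈ s, q i * (Y i ω ^ 2 / (4 * (L ^ 2 * γ i))))) := by
          have hfactor : ∀ i ∈ s, f i ω ^ q i
              = ENNReal.ofReal (Real.exp (q i * (Y i ω ^ 2 / (4 * (L ^ 2 * γ i))))) := by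
            intro i hi
            rw [hfdef]
            simp only
            rw [ENNReal.ofReal_rpow_of_pos (Real.exp_pos _)]
            congr 1
            rw [← Real.exp_mul, mul_comm]
          rw [Finset.prod_congr rfl hfactor,
            ← ENNReal.ofReal_prod_of_nonneg (fun i _ => (Real.exp_pos _).le), ← Real.exp_sum]
        rw [hprod]
        apply ENNReal.ofReal_le_ofReal
        apply Real.exp_le_exp.mpr
        rw [Finset.sum_div]
        refine Finset.sum_le_sum fun i hi => ?_
        have hγi := hγpos i hi
        have heq : q i * (Y i ω ^ 2 / (4 * (L ^ 2 * γ i))) = Y i ω ^ 2 / (4 * L ^ 2 * Ts) := by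
          rw [hqdef]
          field_simp
        rw [heq]
        apply div_le_div_of_nonneg_left (sq_nonneg _) (by positivity)
        rw [hDdef]
        nlinarith [sq_nonneg L]
      calc ∫⁻ ω, ENNReal.ofReal (Real.exp ((∑ i ∈ s, Y i ω ^ 2) / D)) ∂P
          ≤ ∫⁻ ω, ∏ i ∈ s, f i ω ^ q i ∂P := lintegral_mono hpt
        _ ≤ ∏ i ∈ s, (∫⁻ ω, f i ω ∂P) ^ q i :=
            ENNReal.lintegral_prod_norm_pow_le s hfmeas hq1 hq0
        _ ≤ ∏ i ∈ s, (ENNReal.ofReal (Real.sqrt 2)) ^ q i :=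
            Finset.prod_le_prod' fun i hi =>
              ENNReal.rpow_le_rpow (hbound i (Finset.mem_filter.mp hi).2) (hq0 i hi)
        _ = (ENNReal.ofReal (Real.sqrt 2)) ^ (∑ i ∈ s, q i) :=
            aux_prod_rpow s _ (by simp [Real.sqrt_pos]) ENNReal.ofReal_ne_top q
        _ = ENNReal.ofReal (Real.sqrt 2) := by rw [hq1, ENNReal.rpow_one]
  -- combine
  have hmain : ∫⁻ ω, ENNReal.ofReal (Real.exp (‖X ω‖ ^ 2 / D)) ∂P ≤
      ENNReal.ofReal (Real.sqrt 2) := by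
    have heq : ∫⁻ ω, ENNReal.ofReal (Real.exp (‖X ω‖ ^ 2 / D)) ∂P = ⨆ n, ∫⁻ ω, G n ω ∂P := by
      rw [← lintegral_iSup' hGmeas (Filter.Eventually.of_forall fun ω => hGmono ω)]
      exact lintegral_congr fun ω => (hsup ω).symm
    rw [heq]
    exact iSup_le hGn
  have hFmeas : AEMeasurable (fun ω => Real.exp (‖X ω‖ ^ 2 / D)) P :=
    Real.measurable_exp.comp_aemeasurable ((hX.norm.pow aemeasurable_const).div_const _)
  have hsqrt2 : Real.sqrt 2 ≤ 2 := by
    have h := Real.sqrt_le_sqrt (by norm_num : (2:ℝ) ≤ 4)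
    rwa [show (4:ℝ) = 2 ^ 2 by norm_num, Real.sqrt_sq (by norm_num : (0:ℝ) ≤ 2)] at h
  constructor
  · refine ⟨hFmeas.aestronglyMeasurable, ?_⟩
    have heq : ∫⁻ ω, ↑‖Real.exp (‖X ω‖ ^ 2 / D)‖₊ ∂P
        = ∫⁻ ω, ENNReal.ofReal (Real.exp (‖X ω‖ ^ 2 / D)) ∂P := by
      refine lintegral_congr fun ω => ?_
      rw [← enorm_eq_nnnorm, ← ofReal_norm, Real.norm_of_nonneg (Real.exp_pos _).le]
    show ∫⁻ ω, ↑‖Real.exp (‖X ω‖ ^ 2 / D)‖₊ ∂P < ⊤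
    rw [heq]
    exact lt_of_le_of_lt hmain ENNReal.ofReal_lt_top
  · rw [integral_eq_lintegral_of_nonneg_ae
      (Filter.Eventually.of_forall fun ω => (Real.exp_pos _).le) hFmeas.aestronglyMeasurable]
    have h1 : (∫⁻ ω, ENNReal.ofReal (Real.exp (‖X ω‖ ^ 2 / D)) ∂P).toReal ≤
        (ENNReal.ofReal (Real.sqrt 2)).toReal :=
      ENNReal.toReal_mono ENNReal.ofReal_ne_top hmain
    rw [ENNReal.toReal_ofReal (Real.sqrt_nonneg _)] at h1
    linarith
end

section
/- For any real numbers a₁,…,aₙ and b₁,…,bₙ ∈ [0,1], we have Σᵢ aᵢbᵢ ≤ Σ_{i=1}^{s} a_{(i)}, where a_{(1)} ≥ ⋯ ≥ a_{(n)} are the aᵢ arranged in decreasing order, s = Σᵢ bᵢ, and for s = r + f with r a non-negative integer and 0 ≤ f < 1, the generalized sum is Σ_{i=1}^{s} cᵢ := Σ_{i=1}^{r} cᵢ + f·c_{r+1}. -/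
open Finset

private lemma abel_aux (n : ℕ) (c d e : ℕ → ℝ)
    (hc : ∀ i, i + 1 < n → c (i + 1) ≤ c i)
    (hpart : ∀ k, k ≤ n → ∑ i ∈ range k, d i ≤ ∑ i ∈ range k, e i)
    (htot : ∑ i ∈ range n, d i = ∑ i ∈ range n, e i) :
    ∑ i ∈ range n, c i * d i ≤ ∑ i ∈ range n, c i * e i := by
  have key : 0 ≤ ∑ i ∈ range n, c i • (e i - d i) := by
    rw [Finset.sum_range_by_parts c (fun i => e i - d i) n]
    have h1 : ∑ j ∈ range n, (e j - d j) = 0 := by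
      rw [Finset.sum_sub_distrib, htot, sub_self]
    rw [h1, smul_zero, zero_sub, neg_nonneg]
    apply Finset.sum_nonpos
    intro i hi
    rw [Finset.mem_range] at hi
    have h2 : c (i + 1) - c i ≤ 0 := by
      have := hc i (by omega)
      linarith
    have h3 : 0 ≤ ∑ j ∈ range (i + 1), (e j - d j) := by
      rw [Finset.sum_sub_distrib, sub_nonneg]
      exact hpart (i + 1) (by omega)
    exact smul_nonpos_of_nonpos_of_nonneg h2 h3
  simp only [smul_eq_mul, mul_sub] at key
  rw [Finset.sum_sub_distrib] at key
  linarith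

/-- Monotone rearrangement: for `a₁,…,aₙ ∈ ℝ` and `b₁,…,bₙ ∈ [0,1]`,
`Σᵢ aᵢ bᵢ ≤ Σ_{i=1}^{s} a_{(i)}` where `a_{(1)} ≥ ⋯ ≥ a_{(n)}` is the decreasing
rearrangement of the `aᵢ` (given by the permutation `σ`), `s = Σᵢ bᵢ`, and for
`s = r + f` (`r = ⌊s⌋`, `0 ≤ f < 1`) the generalized sum is
`Σ_{i=1}^{r} a_{(i)} + f · a_{(r+1)}`. -/
theorem stmt_7 {n : ℕ} (a b : Fin n → ℝ)
    (hb : ∀ i, b i ∈ Set.Icc (0 : ℝ) 1)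
    (σ : Equiv.Perm (Fin n))
    (hσ : ∀ i j : Fin n, i ≤ j → a (σ j) ≤ a (σ i)) :
    ∑ i, a i * b i ≤
      (∑ i ∈ Finset.range ⌊∑ i, b i⌋₊,
          (if h : i < n then a (σ ⟨i, h⟩) else 0)) +
        ((∑ i, b i) - ⌊∑ i, b i⌋₊) *
          (if h : ⌊∑ i, b i⌋₊ < n then a (σ ⟨⌊∑ i, b i⌋₊, h⟩) else 0) := by
  set s : ℝ := ∑ i, b i with hs_def
  set c : ℕ → ℝ := fun i => if h : i < n then a (σ ⟨i, h⟩) else 0 with hc_def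
  set d : ℕ → ℝ := fun i => if h : i < n then b (σ ⟨i, h⟩) else 0 with hd_def
  set e : ℕ → ℝ := fun i => min 1 (max 0 (s - i)) with he_def
  have hs0 : 0 ≤ s := Finset.sum_nonneg fun i _ => (hb i).1
  have hsn : s ≤ n := by
    calc s ≤ ∑ _i : Fin n, (1 : ℝ) := Finset.sum_le_sum fun i _ => (hb i).2
    _ = n := by simp
  set r : ℕ := ⌊s⌋₊ with hr_def
  have hrn : r ≤ n := by
    have := Nat.floor_le_floor hsn
    simpa using this
  have hf0 : (r : ℝ) ≤ s := Nat.floor_le hs0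
  have hf1 : s < r + 1 := Nat.lt_floor_add_one s
  -- partial sums of e
  have hE : ∀ k : ℕ, ∑ i ∈ range k, e i = min s k := by
    intro k
    induction k with
    | zero => simp [min_eq_right hs0]
    | succ k ih =>
      rw [Finset.sum_range_succ, ih]
      simp only [he_def]
      push_cast
      rcases le_total s (k : ℝ) with h | h
      · rw [min_eq_left h, max_eq_left (by linarith), min_eq_right (by norm_num),
          min_eq_left (by linarith)]
        ring
      · rcases le_total s ((k : ℝ) + 1) with h2 | h2
        · rw [min_eq_right h, max_eq_right (by linarith), min_eq_right (by linarith),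
            min_eq_left h2]
          ring
        · rw [min_eq_right h, max_eq_right (by linarith), min_eq_left (by linarith),
            min_eq_right h2]
  -- total sum of d
  have hDtot : ∑ i ∈ range n, d i = s := by
    rw [hs_def, Finset.sum_range]
    rw [← Equiv.sum_comp σ b]
    apply Finset.sum_congr rfl
    intro i _
    simp [hd_def, i.isLt]
  have hd01 : ∀ i, 0 ≤ d i ∧ d i ≤ 1 := by
    intro i
    simp only [hd_def]
    split
    · exact ⟨(hb _).1, (hb _).2⟩
    · norm_num
  have hpart : ∀ k, k ≤ n → ∑ i ∈ range k, d i ≤ ∑ i ∈ range k, e i := by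
    intro k hk
    rw [hE k, le_min_iff]
    constructor
    · rw [← hDtot]
      apply Finset.sum_le_sum_of_subset_of_nonneg (Finset.range_subset_range.mpr hk)
      intro i _ _
      exact (hd01 i).1
    · calc ∑ i ∈ range k, d i ≤ ∑ _i ∈ range k, (1 : ℝ) :=
            Finset.sum_le_sum fun i _ => (hd01 i).2
      _ = k := by simp
  have htot : ∑ i ∈ range n, d i = ∑ i ∈ range n, e i := by
    rw [hDtot, hE, min_eq_left hsn]
  have hc_anti : ∀ i, i + 1 < n → c (i + 1) ≤ c i := by
    intro i hi
    simp only [hc_def, dif_pos hi, dif_pos (by omega : i < n)]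
    exact hσ ⟨i, by omega⟩ ⟨i + 1, hi⟩ (by simp)
  have hLHS : ∑ i, a i * b i = ∑ i ∈ range n, c i * d i := by
    rw [Finset.sum_range, ← Equiv.sum_comp σ (fun i => a i * b i)]
    apply Finset.sum_congr rfl
    intro i _
    simp [hc_def, hd_def, i.isLt]
  have hRHS : ∑ i ∈ range n, c i * e i
      = (∑ i ∈ range r, c i) + (s - r) * c r := by
    rw [Finset.range_eq_Ico, ← Finset.sum_Ico_consecutive _ (Nat.zero_le r) hrn]
    have h1 : ∑ i ∈ Ico 0 r, c i * e i = ∑ i ∈ Ico 0 r, c i := by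
      apply Finset.sum_congr rfl
      intro i hi
      rw [Finset.mem_Ico] at hi
      have : (i : ℝ) + 1 ≤ r := by exact_mod_cast hi.2
      have he1 : e i = 1 := by
        simp only [he_def]
        rw [max_eq_right (by linarith), min_eq_left (by linarith)]
      rw [he1, mul_one]
    rw [h1]
    rcases eq_or_lt_of_le hrn with h | h
    · have hcr : c r = 0 := by simp [hc_def, h]
      rw [hcr, mul_zero, add_zero, h, Finset.Ico_self, Finset.sum_empty, add_zero, Finset.range_eq_Ico]
    · rw [Finset.sum_eq_sum_Ico_succ_bot h]
      have her : e r = s - r := by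
        simp only [he_def]
        rw [max_eq_right (by linarith), min_eq_right (by linarith)]
      have hrest : ∑ i ∈ Ico (r + 1) n, c i * e i = 0 := by
        apply Finset.sum_eq_zero
        intro i hi
        rw [Finset.mem_Ico] at hi
        have : (r : ℝ) + 1 ≤ i := by exact_mod_cast hi.1
        have hei : e i = 0 := by
          simp only [he_def]
          rw [max_eq_left (by linarith), min_eq_right (by linarith)]
        rw [hei, mul_zero]
      rw [hrest, her, Finset.range_eq_Ico]
      ring
  have key := abel_aux n c d e hc_anti hpart htot
  rw [hLHS]
  calc ∑ i ∈ range n, c i * d i ≤ ∑ i ∈ range n, c i * e i := key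
  _ = (∑ i ∈ range r, c i) + (s - r) * c r := hRHS
end

section
/- Let Yₙ follow the Gaussian mixture distribution Fₙ = (1−εₙ)N(0,1) + εₙN(0,aₙ²) with aₙ > 1 and εₙ = aₙ⁻⁴. Then Var(Yₙ) = 1 − aₙ⁻⁴ + aₙ⁻², and for every integer k ≥ 2, E|Yₙ² − E[Yₙ²]|ᵏ ≤ 4·k!·(2aₙ²)^{k−2}·c for a constant c independent of n and k. -/
open MeasureTheory ProbabilityTheory

open scoped NNReal ENNReal
open Real Set

lemma gauss_integral (v : ℝ≥0) (hv : v ≠ 0) (g : ℝ → ℝ) :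
    ∫ x, g x ∂(gaussianReal 0 v) = ∫ x, gaussianPDFReal 0 v x * g x := by
  rw [gaussianReal_of_var_ne_zero 0 hv]
  have : gaussianPDF 0 v = fun x => ((Real.toNNReal (gaussianPDFReal 0 v x) : ℝ≥0) : ℝ≥0∞) := by
    funext x; rfl
  rw [this, integral_withDensity_eq_integral_smul
    ((measurable_gaussianPDFReal 0 v).real_toNNReal) g]
  congr 1; funext x
  rw [NNReal.smul_def, smul_eq_mul, Real.coe_toNNReal _ (gaussianPDFReal_nonneg 0 v x)]

lemma gauss_integrable (v : ℝ≥0) (hv : v ≠ 0) {g : ℝ → ℝ}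
    (h : Integrable (fun x => gaussianPDFReal 0 v x * g x)) :
    Integrable g (gaussianReal 0 v) := by
  rw [gaussianReal_of_var_ne_zero 0 hv]
  have : gaussianPDF 0 v = fun x => ((Real.toNNReal (gaussianPDFReal 0 v x) : ℝ≥0) : ℝ≥0∞) := by
    funext x; rfl
  rw [this, integrable_withDensity_iff_integrable_smul
    ((measurable_gaussianPDFReal 0 v).real_toNNReal)]
  refine h.congr (Filter.Eventually.of_forall fun x => ?_)
  simp only [NNReal.smul_def, smul_eq_mul, Real.coe_toNNReal _ (gaussianPDFReal_nonneg 0 v x)]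

lemma gauss_even_moment (v : ℝ≥0) (hv : 0 < (v:ℝ)) (j : ℕ) :
    ∫ x, x ^ (2*j) ∂(gaussianReal 0 v) = (2*(v:ℝ))^j * Real.Gamma (j + 1/2) / √π := by
  have hvne : v ≠ 0 := by exact_mod_cast hv.ne'
  have h2v : 0 < 2*(v:ℝ) := by positivity
  set b : ℝ := (2*(v:ℝ))⁻¹ with hb
  have hbpos : 0 < b := by positivity
  rw [gauss_integral v hvne]
  have hpdf : ∀ x : ℝ, gaussianPDFReal 0 v x * x ^ (2*j)
      = (√(2*π*(v:ℝ)))⁻¹ * ((fun y => y ^ (2*j) * Real.exp (-b * y^2)) |x|) := by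
    intro x
    have h1 : |x| ^ (2*j) = x ^ (2*j) := by
      rw [pow_mul, sq_abs, pow_mul]
    have h2 : -b * |x|^2 = -x^2/(2*(v:ℝ)) := by
      rw [sq_abs, hb]; field_simp
    simp only [gaussianPDFReal, sub_zero, h1, h2]
    ring
  simp_rw [hpdf]
  rw [integral_const_mul]
  have habs := integral_comp_abs (f := fun y => y ^ (2*j) * Real.exp (-b * y^2))
  rw [habs]
  have key : ∫ x in Ioi (0:ℝ), x ^ (2*j) * Real.exp (-b * x^2)
      = b ^ (-(((2*j : ℕ):ℝ) + 1) / 2) * (1/2) * Real.Gamma ((((2*j : ℕ):ℝ) + 1) / 2) := by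
    rw [← integral_rpow_mul_exp_neg_mul_rpow two_pos
      (lt_of_lt_of_le neg_one_lt_zero (Nat.cast_nonneg _)) hbpos]
    refine setIntegral_congr_fun measurableSet_Ioi (fun x hx => ?_)
    rw [← Real.rpow_natCast x (2*j)]
    norm_num
  rw [key]
  have harg : (((2*j : ℕ):ℝ) + 1) / 2 = (j:ℝ) + 1/2 := by push_cast; ring
  rw [show (-(((2*j : ℕ):ℝ) + 1) / 2) = -((j:ℝ)+1/2) by push_cast; ring, harg]
  have hbpow : b ^ (-((j:ℝ) + 1/2)) = (2*(v:ℝ)) ^ j * √(2*(v:ℝ)) := by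
    rw [hb, Real.inv_rpow h2v.le, ← Real.rpow_neg h2v.le, neg_neg,
      Real.rpow_add h2v, Real.rpow_natCast, ← Real.sqrt_eq_rpow]
  rw [hbpow]
  have hsq : √(2*π*(v:ℝ)) = √(2*(v:ℝ)) * √π := by
    rw [show 2*π*(v:ℝ) = (2*(v:ℝ))*π by ring, Real.sqrt_mul h2v.le]
  rw [hsq]
  have h1 : √(2*(v:ℝ)) ≠ 0 := by positivity
  have h2 : √π ≠ 0 := by positivity
  field_simp

lemma gauss_even_moment_integrable (v : ℝ≥0) (hv : 0 < (v:ℝ)) (j : ℕ) :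
    Integrable (fun x => x ^ (2*j)) (gaussianReal 0 v) := by
  have hvne : v ≠ 0 := by exact_mod_cast hv.ne'
  have h2v : 0 < 2*(v:ℝ) := by positivity
  set b : ℝ := (2*(v:ℝ))⁻¹ with hb
  have hbpos : 0 < b := by positivity
  apply gauss_integrable v hvne
  have base : Integrable (fun x : ℝ => x ^ (2*j) * Real.exp (-b * x^2)) := by
    have h := integrable_rpow_mul_exp_neg_mul_sq hbpos
      (lt_of_lt_of_le neg_one_lt_zero (Nat.cast_nonneg (2*j)) : (-1:ℝ) < ((2*j:ℕ):ℝ))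
    refine h.congr (Filter.Eventually.of_forall fun x => ?_)
    simp only [Real.rpow_natCast]
  refine (base.const_mul ((√(2*π*(v:ℝ)))⁻¹)).congr (Filter.Eventually.of_forall fun x => ?_)
  simp only [gaussianPDFReal, sub_zero]
  have h2 : -b * x^2 = -x^2/(2*(v:ℝ)) := by rw [hb]; field_simp
  rw [h2]; ring

lemma Gamma_half_le (j : ℕ) : Real.Gamma ((j:ℝ) + 1/2) ≤ (j.factorial : ℝ) * √π := by
  induction j with
  | zero =>
    have : ((0:ℕ):ℝ) + 1/2 = 1/2 := by norm_num
    rw [this, Real.Gamma_one_half_eq]; simp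
  | succ n ih =>
    have harg : ((n+1:ℕ):ℝ) + 1/2 = ((n:ℝ) + 1/2) + 1 := by push_cast; ring
    rw [harg, Real.Gamma_add_one (by positivity)]
    have hpos : 0 < Real.Gamma ((n:ℝ) + 1/2) := Real.Gamma_pos_of_pos (by positivity)
    calc ((n:ℝ)+1/2) * Real.Gamma ((n:ℝ)+1/2) ≤ ((n:ℝ)+1) * ((n.factorial:ℝ) * √π) := by
          apply mul_le_mul (by linarith) ih hpos.le (by positivity)
      _ = ((n+1:ℕ).factorial : ℝ) * √π := by
          rw [Nat.factorial_succ]; push_cast; ring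

lemma gauss_even_moment_le (v : ℝ≥0) (hv : 0 < (v:ℝ)) (j : ℕ) :
    ∫ x, x ^ (2*j) ∂(gaussianReal 0 v) ≤ (2*(v:ℝ))^j * (j.factorial : ℝ) := by
  rw [gauss_even_moment v hv j, div_le_iff₀ (Real.sqrt_pos.mpr Real.pi_pos)]
  have := Gamma_half_le j
  have h2v : (0:ℝ) ≤ (2*(v:ℝ))^j := by positivity
  calc (2*(v:ℝ))^j * Real.Gamma ((j:ℝ) + 1/2) ≤ (2*(v:ℝ))^j * ((j.factorial:ℝ) * √π) := by
        exact mul_le_mul_of_nonneg_left this h2v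
    _ = (2*(v:ℝ))^j * (j.factorial:ℝ) * √π := by ring

lemma sum_inv_factorial_le (k : ℕ) :
    ∑ i ∈ Finset.range (k+1), ((i.factorial : ℝ))⁻¹ ≤ 3 - ((k.factorial : ℝ))⁻¹ := by
  induction k with
  | zero => norm_num
  | succ n ih =>
    rw [Finset.sum_range_succ]
    rcases Nat.eq_zero_or_pos n with hn | hn
    · subst hn; norm_num [Finset.sum_range_succ]
    · have h1 : (0:ℝ) < (n.factorial : ℝ) := by positivity
      have key : 2 * ((n+1).factorial : ℝ)⁻¹ ≤ ((n.factorial : ℝ))⁻¹ := by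
        rw [Nat.factorial_succ]
        push_cast
        rw [mul_inv]
        have hn1 : (1:ℝ) ≤ (n:ℝ) := by exact_mod_cast hn
        have hinv : ((n:ℝ)+1)⁻¹ ≤ 2⁻¹ := by
          rw [inv_le_inv₀ (by linarith) (by norm_num)]; linarith
        calc 2 * (((n:ℝ)+1)⁻¹ * ((n.factorial:ℝ))⁻¹)
            ≤ 2 * (2⁻¹ * ((n.factorial:ℝ))⁻¹) := by
              apply mul_le_mul_of_nonneg_left _ (by norm_num)
              apply mul_le_mul_of_nonneg_right hinv (by positivity)
          _ = ((n.factorial:ℝ))⁻¹ := by ring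
      linarith

lemma gauss_abs_moment (v : ℝ≥0) (hv : 0 < (v:ℝ)) {m : ℝ} (hm0 : 0 ≤ m)
    (hm : m ≤ 2*(v:ℝ)) (k : ℕ) :
    Integrable (fun x => |x^2 - m|^k) (gaussianReal 0 v) ∧
    ∫ x, |x^2 - m|^k ∂(gaussianReal 0 v) ≤ 3 * (k.factorial : ℝ) * (2*(v:ℝ))^k := by
  set w := 2*(v:ℝ) with hw
  have hwpos : 0 < w := by positivity
  have hexp : ∀ x : ℝ, (x^2 + w)^k
      = ∑ j ∈ Finset.range (k+1), x^(2*j) * (w^(k-j) * (k.choose j : ℝ)) := by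
    intro x
    rw [add_pow]
    refine Finset.sum_congr rfl fun j hj => ?_
    rw [← pow_mul]
    ring
  have hint_g : Integrable (fun x => (x^2 + w)^k) (gaussianReal 0 v) := by
    have h : Integrable (fun x => ∑ j ∈ Finset.range (k+1),
        x^(2*j) * (w^(k-j) * (k.choose j : ℝ))) (gaussianReal 0 v) := by
      apply integrable_finset_sum
      intro j hj
      exact (gauss_even_moment_integrable v hv j).mul_const _
    exact h.congr (Filter.Eventually.of_forall fun x => (hexp x).symm)
  have hptw : ∀ x : ℝ, |x^2 - m|^k ≤ (x^2 + w)^k := by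
    intro x
    apply pow_le_pow_left₀ (abs_nonneg _)
    calc |x^2 - m| ≤ |x^2| + |m| := abs_sub _ _
      _ = x^2 + m := by rw [abs_of_nonneg (sq_nonneg x), abs_of_nonneg hm0]
      _ ≤ x^2 + w := by linarith
  have hintf : Integrable (fun x => |x^2 - m|^k) (gaussianReal 0 v) := by
    refine hint_g.mono ?_ (Filter.Eventually.of_forall fun x => ?_)
    · exact (((continuous_pow 2).sub continuous_const).abs.pow k).aestronglyMeasurable
    · simp only [Real.norm_eq_abs, abs_pow, abs_abs]
      calc |x^2-m|^k ≤ (x^2+w)^k := hptw x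
        _ = |x^2+w|^k := by
            rw [abs_of_nonneg (add_nonneg (sq_nonneg x) hwpos.le)]
  refine ⟨hintf, ?_⟩
  calc ∫ x, |x^2 - m|^k ∂(gaussianReal 0 v)
      ≤ ∫ x, (x^2 + w)^k ∂(gaussianReal 0 v) :=
        integral_mono hintf hint_g (fun x => hptw x)
    _ = ∑ j ∈ Finset.range (k+1),
        (∫ x, x^(2*j) ∂(gaussianReal 0 v)) * (w^(k-j) * (k.choose j : ℝ)) := by
        rw [show (fun x : ℝ => (x^2+w)^k)
            = fun x => ∑ j ∈ Finset.range (k+1), x^(2*j) * (w^(k-j) * (k.choose j:ℝ))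
          from funext hexp]
        rw [integral_finset_sum _
          (fun j _ => (gauss_even_moment_integrable v hv j).mul_const _)]
        exact Finset.sum_congr rfl fun j hj => integral_mul_const _ _
    _ ≤ ∑ j ∈ Finset.range (k+1), w^k * (k.factorial:ℝ) * (((k-j).factorial : ℝ))⁻¹ := by
        refine Finset.sum_le_sum fun j hj => ?_
        have hjk : j ≤ k := Nat.lt_succ_iff.mp (Finset.mem_range.mp hj)
        have h1 : (∫ x, x^(2*j) ∂(gaussianReal 0 v)) * (w^(k-j) * (k.choose j:ℝ))
            ≤ (w^j * (j.factorial:ℝ)) * (w^(k-j) * (k.choose j:ℝ)) :=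
          mul_le_mul_of_nonneg_right (gauss_even_moment_le v hv j) (by positivity)
        refine h1.trans (le_of_eq ?_)
        have hch : (k.choose j : ℝ) * (j.factorial:ℝ) * ((k-j).factorial:ℝ)
            = (k.factorial:ℝ) := by
          exact_mod_cast congrArg Nat.cast (Nat.choose_mul_factorial_mul_factorial hjk)
        have hfac : (((k-j).factorial:ℝ)) ≠ 0 := by positivity
        have hpow : w^j * w^(k-j) = w^k := by
          rw [← pow_add, Nat.add_sub_cancel' hjk]
        have hch' : (k.choose j : ℝ) * (j.factorial:ℝ)
            = (k.factorial:ℝ) / ((k-j).factorial:ℝ) := by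
          rw [eq_div_iff hfac]; linarith
        calc (w^j * (j.factorial:ℝ)) * (w^(k-j) * (k.choose j:ℝ))
            = (w^j * w^(k-j)) * ((k.choose j:ℝ) * (j.factorial:ℝ)) := by ring
          _ = w^k * ((k.factorial:ℝ) / ((k-j).factorial:ℝ)) := by rw [hpow, hch']
          _ = w^k * (k.factorial:ℝ) * (((k-j).factorial:ℝ))⁻¹ := by
              rw [div_eq_mul_inv]; ring
    _ = w^k * (k.factorial:ℝ) * ∑ j ∈ Finset.range (k+1), (((k-j).factorial : ℝ))⁻¹ := by
        rw [Finset.mul_sum]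
    _ ≤ w^k * (k.factorial:ℝ) * 3 := by
        apply mul_le_mul_of_nonneg_left _ (by positivity)
        have hrefl := Finset.sum_range_reflect (fun i => ((i.factorial:ℝ))⁻¹) (k+1)
        simp only [Nat.add_sub_cancel] at hrefl
        calc ∑ j ∈ Finset.range (k+1), (((k-j).factorial : ℝ))⁻¹
            = ∑ i ∈ Finset.range (k+1), ((i.factorial : ℝ))⁻¹ := by
              rw [← hrefl]
          _ ≤ 3 - ((k.factorial:ℝ))⁻¹ := sum_inv_factorial_le k
          _ ≤ 3 := by
              have : (0:ℝ) ≤ ((k.factorial:ℝ))⁻¹ := by positivity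
              linarith
    _ = 3 * (k.factorial:ℝ) * (2*(v:ℝ))^k := by rw [hw]; ring

lemma gauss_pdf_even (v : ℝ≥0) (x : ℝ) :
    gaussianPDFReal 0 v (-x) = gaussianPDFReal 0 v x := by
  simp [gaussianPDFReal, neg_sq]

lemma gauss_mean_zero (v : ℝ≥0) (hv : v ≠ 0) :
    ∫ x, x ∂(gaussianReal 0 v) = 0 := by
  rw [gauss_integral v hv]
  have h := integral_neg_eq_self (fun x => gaussianPDFReal 0 v x * x) volume
  have h2 : ∀ x : ℝ, gaussianPDFReal 0 v (-x) * (-x) = -(gaussianPDFReal 0 v x * x) := by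
    intro x; rw [gauss_pdf_even]; ring
  simp only [h2] at h
  rw [integral_neg] at h
  linarith

lemma gauss_mean_integrable (v : ℝ≥0) (hv : 0 < (v:ℝ)) :
    Integrable (fun x : ℝ => x) (gaussianReal 0 v) := by
  have h := gauss_even_moment_integrable v hv 1
  have h2 : Integrable (fun x : ℝ => x^2) (gaussianReal 0 v) := by
    simpa using h
  have : IsProbabilityMeasure (gaussianReal 0 v) := by infer_instance
  have := ((memLp_two_iff_integrable_sq aestronglyMeasurable_id).mpr
    (by simpa using h2)).integrable (by norm_num : (1:ℝ≥0∞) ≤ 2)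
  exact this

lemma gauss_second_moment (v : ℝ≥0) (hv : 0 < (v:ℝ)) :
    ∫ x, x^2 ∂(gaussianReal 0 v) = (v:ℝ) := by
  have h := gauss_even_moment v hv 1
  have hΓ : Real.Gamma (((1:ℕ):ℝ) + 1/2) = √π / 2 := by
    rw [show ((1:ℕ):ℝ) + 1/2 = 1/2 + 1 by norm_num,
      Real.Gamma_add_one (by norm_num), Real.Gamma_one_half_eq]
    ring
  rw [hΓ] at h
  have hπ : √π ≠ 0 := by positivity
  rw [show 2*1 = 2 from rfl] at h
  rw [h, pow_one]
  field_simp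

lemma mix_integral {p q : ℝ} (hp : 0 ≤ p) (hq : 0 ≤ q) (ν₁ ν₂ : Measure ℝ) (f : ℝ → ℝ)
    (h1 : Integrable f ν₁) (h2 : Integrable f ν₂) :
    ∫ x, f x ∂(ENNReal.ofReal p • ν₁ + ENNReal.ofReal q • ν₂)
      = p * ∫ x, f x ∂ν₁ + q * ∫ x, f x ∂ν₂ := by
  rw [integral_add_measure (h1.smul_measure ENNReal.ofReal_ne_top)
      (h2.smul_measure ENNReal.ofReal_ne_top),
    integral_smul_measure, integral_smul_measure,
    ENNReal.toReal_ofReal hp, ENNReal.toReal_ofReal hq]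
  simp [smul_eq_mul]

lemma mix_integrable {p q : ℝ} (ν₁ ν₂ : Measure ℝ) (f : ℝ → ℝ)
    (h1 : Integrable f ν₁) (h2 : Integrable f ν₂) :
    Integrable f (ENNReal.ofReal p • ν₁ + ENNReal.ofReal q • ν₂) :=
  (h1.smul_measure ENNReal.ofReal_ne_top).add_measure
    (h2.smul_measure ENNReal.ofReal_ne_top)

lemma mix_prob {p q : ℝ} (hp : 0 ≤ p) (hq : 0 ≤ q) (hpq : p + q = 1)
    (ν₁ ν₂ : Measure ℝ) [IsProbabilityMeasure ν₁] [IsProbabilityMeasure ν₂] :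
    IsProbabilityMeasure (ENNReal.ofReal p • ν₁ + ENNReal.ofReal q • ν₂) := by
  constructor
  rw [Measure.add_apply, Measure.smul_apply, Measure.smul_apply, measure_univ, measure_univ,
    smul_eq_mul, smul_eq_mul, mul_one, mul_one, ← ENNReal.ofReal_add hp hq, hpq,
    ENNReal.ofReal_one]

/-- Let `Y ~ F = (1−ε)N(0,1) + εN(0,a²)` with `a > 1` and `ε = a⁻⁴`. Then
`Var(Y) = 1 − a⁻⁴ + a⁻²`, and for every integer `k ≥ 2`,
`E|Y² − E[Y²]|ᵏ ≤ 4 · k! · (2a²)^{k−2} · c` for a constant `c` independent of `a` and `k`. -/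
theorem stmt_12 :
    ∃ c : ℝ, 0 < c ∧
      ∀ a : ℝ, 1 < a →
        (ProbabilityTheory.variance id
            (ENNReal.ofReal (1 - 1 / a ^ 4) • gaussianReal 0 1 +
              ENNReal.ofReal (1 / a ^ 4) • gaussianReal 0 (Real.toNNReal (a ^ 2))) =
          1 - 1 / a ^ 4 + 1 / a ^ 2) ∧
        ∀ k : ℕ, 2 ≤ k →
          (∫ x, |x ^ 2 - ∫ y, y ^ 2 ∂(ENNReal.ofReal (1 - 1 / a ^ 4) • gaussianReal 0 1 +
                  ENNReal.ofReal (1 / a ^ 4) • gaussianReal 0 (Real.toNNReal (a ^ 2)))| ^ k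
              ∂(ENNReal.ofReal (1 - 1 / a ^ 4) • gaussianReal 0 1 +
                  ENNReal.ofReal (1 / a ^ 4) • gaussianReal 0 (Real.toNNReal (a ^ 2)))) ≤
            4 * (Nat.factorial k : ℝ) * (2 * a ^ 2) ^ (k - 2) * c := by
  refine ⟨6, by norm_num, fun a ha => ?_⟩
  have ha0 : 0 < a := lt_trans one_pos ha
  have ha4 : 1 < a^4 := one_lt_pow₀ (by linarith) (by norm_num)
  have ha2 : 1 < a^2 := one_lt_pow₀ (by linarith) (by norm_num)
  set ε : ℝ := 1/a^4 with hεdef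
  have hε0 : 0 < ε := by positivity
  have hε1 : ε < 1 := by
    rw [hεdef, div_lt_one (by positivity)]; exact ha4
  set vN : ℝ≥0 := Real.toNNReal (a^2) with hvNdef
  have hvN : ((vN : ℝ≥0) : ℝ) = a^2 := Real.coe_toNNReal _ (by positivity)
  have hvNpos : 0 < ((vN : ℝ≥0) : ℝ) := by rw [hvN]; positivity
  have h1pos : 0 < (((1:ℝ≥0) : ℝ≥0) : ℝ) := by norm_num
  set μ : Measure ℝ := ENNReal.ofReal (1 - ε) • gaussianReal 0 1 +
      ENNReal.ofReal ε • gaussianReal 0 vN with hμdef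
  have hε1' : (0:ℝ) ≤ 1 - ε := by linarith
  -- second moment of the mixture
  have hsq1 : Integrable (fun x : ℝ => x^2) (gaussianReal 0 1) := by
    simpa using gauss_even_moment_integrable 1 h1pos 1
  have hsqN : Integrable (fun x : ℝ => x^2) (gaussianReal 0 vN) := by
    simpa using gauss_even_moment_integrable vN hvNpos 1
  have hm : ∫ y, y^2 ∂μ = 1 - 1/a^4 + 1/a^2 := by
    rw [hμdef, mix_integral hε1' hε0.le _ _ _ hsq1 hsqN,
      gauss_second_moment 1 h1pos, gauss_second_moment vN hvNpos, hvN, hεdef]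
    have : a ≠ 0 := ha0.ne'
    field_simp
    push_cast; ring
  have : IsProbabilityMeasure μ := by
    rw [hμdef]
    exact mix_prob hε1' hε0.le (by ring) _ _
  constructor
  · -- variance
    have hmean : ∫ x, x ∂μ = 0 := by
      rw [hμdef, mix_integral hε1' hε0.le _ _ _
        (gauss_mean_integrable 1 h1pos) (gauss_mean_integrable vN hvNpos),
        gauss_mean_zero 1 one_ne_zero,
        gauss_mean_zero vN (by exact_mod_cast hvNpos.ne')]
      ring
    have hsqμ : Integrable (fun x : ℝ => x^2) μ := by
      rw [hμdef]; exact mix_integrable _ _ _ hsq1 hsqN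
    have hmemℒp : MemLp (id : ℝ → ℝ) 2 μ :=
      (memLp_two_iff_integrable_sq aestronglyMeasurable_id).mpr (by simpa using hsqμ)
    rw [variance_eq_sub hmemℒp]
    have h1 : μ[(id : ℝ → ℝ)^2] = ∫ y, y^2 ∂μ := by
      congr 1
    have h2 : μ[(id : ℝ → ℝ)] = ∫ x, x ∂μ := rfl
    rw [h1, h2, hmean, hm]
    ring
  · -- moment bound
    intro k hk
    set m : ℝ := ∫ y, y^2 ∂μ with hmdef
    have hmval : m = 1 - 1/a^4 + 1/a^2 := hm
    have hm0 : 0 ≤ m := by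
      rw [hmval]
      have h1 : 1/a^4 ≤ 1 := by
        rw [div_le_one (by positivity)]; linarith
      have h2 : 0 < 1/a^2 := by positivity
      linarith
    have hm2 : m ≤ 2 := by
      rw [hmval]
      have h1 : 0 < 1/a^4 := by positivity
      have h2 : 1/a^2 ≤ 1 := by
        rw [div_le_one (by positivity)]; linarith
      linarith
    have hb1 := gauss_abs_moment 1 h1pos hm0 (by norm_num; linarith : m ≤ 2*(((1:ℝ≥0)):ℝ)) k
    have hbN := gauss_abs_moment vN hvNpos hm0
      (by rw [hvN]; nlinarith : m ≤ 2*((vN:ℝ≥0):ℝ)) k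
    have hμint : ∫ x, |x^2 - m|^k ∂μ
        = (1-ε) * ∫ x, |x^2 - m|^k ∂(gaussianReal 0 1)
          + ε * ∫ x, |x^2 - m|^k ∂(gaussianReal 0 vN) := by
      rw [hμdef, mix_integral hε1' hε0.le _ _ _ hb1.1 hbN.1]
    -- bounds
    have hI1 : ∫ x, |x^2 - m|^k ∂(gaussianReal 0 1) ≤ 3 * (k.factorial:ℝ) * 2^k := by
      have h := hb1.2
      norm_num at h
      exact h
    have hIN : ∫ x, |x^2 - m|^k ∂(gaussianReal 0 vN)
        ≤ 3 * (k.factorial:ℝ) * (2*a^2)^k := by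
      have := hbN.2
      rwa [hvN] at this
    have hI1nn : 0 ≤ ∫ x, |x^2 - m|^k ∂(gaussianReal 0 1) :=
      integral_nonneg fun x => by positivity
    have hINnn : 0 ≤ ∫ x, |x^2 - m|^k ∂(gaussianReal 0 vN) :=
      integral_nonneg fun x => by positivity
    set n := k - 2 with hndef
    have hkn : k = n + 2 := by omega
    have hfac : (0:ℝ) ≤ (k.factorial:ℝ) := by positivity
    have key1 : (1-ε) * ∫ x, |x^2 - m|^k ∂(gaussianReal 0 1)
        ≤ 3 * (k.factorial:ℝ) * 4 * (2*a^2)^n := by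
      calc (1-ε) * ∫ x, |x^2 - m|^k ∂(gaussianReal 0 1)
          ≤ 1 * ∫ x, |x^2 - m|^k ∂(gaussianReal 0 1) := by
            apply mul_le_mul_of_nonneg_right _ hI1nn; linarith
        _ = ∫ x, |x^2 - m|^k ∂(gaussianReal 0 1) := one_mul _
        _ ≤ 3 * (k.factorial:ℝ) * 2^k := hI1
        _ = 3 * (k.factorial:ℝ) * 4 * 2^n := by rw [hkn]; ring
        _ ≤ 3 * (k.factorial:ℝ) * 4 * (2*a^2)^n := by
            apply mul_le_mul_of_nonneg_left _ (by positivity)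
            apply pow_le_pow_left₀ (by norm_num)
            nlinarith
    have key2 : ε * ∫ x, |x^2 - m|^k ∂(gaussianReal 0 vN)
        ≤ 3 * (k.factorial:ℝ) * 4 * (2*a^2)^n := by
      calc ε * ∫ x, |x^2 - m|^k ∂(gaussianReal 0 vN)
          ≤ ε * (3 * (k.factorial:ℝ) * (2*a^2)^k) :=
            mul_le_mul_of_nonneg_left hIN hε0.le
        _ = 3 * (k.factorial:ℝ) * 4 * (2*a^2)^n := by
            rw [hεdef, hkn]
            have : a ≠ 0 := ha0.ne'
            field_simp
            ring
    have := hμint ▸ (add_le_add key1 key2)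
    calc ∫ x, |x^2 - m|^k ∂μ ≤ 3 * (k.factorial:ℝ) * 4 * (2*a^2)^n
          + 3 * (k.factorial:ℝ) * 4 * (2*a^2)^n := this
      _ = 4 * (k.factorial:ℝ) * (2*a^2)^n * 6 := by ring
end

section
/- Let Z* be the membership matrix of a partition G₁*,…,G_K* of {1,…,n} (Z*_{ij} = 1/n_k if i,j ∈ G_k*, else 0) and let Z belong to the SDP feasible set 𝒞 = {Zᵀ = Z, Z ⪰ 0, tr(Z) = K, Z𝟙ₙ = 𝟙ₙ, Z ≥ 0}. Then |Z* − Z*ZZ*|₁ = |Z* − Z*Z|₁ = 2·Σ_{k≠m} |Z_{G_k*G_m*}|₁, where |M|₁ denotes the sum of absolute values of all entries and Z_{G_k*G_m*} is the submatrix of Z with rows in G_k* and columns in G_m*. -/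
open Finset

private lemma fiber_sum {n K : ℕ} (c : Fin n → Fin K) (g : Fin K → ℝ) :
    ∑ i, g (c i) = ∑ k, ((univ.filter fun l => c l = k).card : ℝ) * g k := by
  rw [← Finset.sum_fiberwise univ c (fun i => g (c i))]
  refine Finset.sum_congr rfl fun k _ => ?_
  rw [Finset.sum_congr rfl (fun i hi => by rw [(Finset.mem_filter.mp hi).2]),
    Finset.sum_const, nsmul_eq_mul]


/-- For the membership matrix `Z*` of a partition of `{1,…,n}` (given by the surjective
cluster map `c`) and any `Z` in the K-means SDP feasible set
`𝒞 = {Zᵀ = Z, Z ⪰ 0, tr Z = K, Z𝟙 = 𝟙, Z ≥ 0}`, one has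
`|Z* − Z*ZZ*|₁ = |Z* − Z*Z|₁ = 2 Σ_{k≠m} |Z_{G_k* G_m*}|₁`. -/
theorem stmt_14 {n K : ℕ} (c : Fin n → Fin K) (hc : Function.Surjective c)
    (Zstar : Matrix (Fin n) (Fin n) ℝ)
    (hZstar : ∀ i j, Zstar i j =
      if c i = c j then 1 / ((Finset.univ.filter fun l => c l = c i).card : ℝ) else 0)
    (Z : Matrix (Fin n) (Fin n) ℝ)
    (hsymm : Z.transpose = Z) (hpsd : Z.PosSemidef) (htr : Z.trace = (K : ℝ))
    (hrow : Z.mulVec (fun _ => (1 : ℝ)) = (fun _ => (1 : ℝ)))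
    (hnonneg : ∀ i j, 0 ≤ Z i j) :
    (∑ i, ∑ j, |(Zstar - Zstar * Z * Zstar) i j|) =
      (∑ i, ∑ j, |(Zstar - Zstar * Z) i j|) ∧
    (∑ i, ∑ j, |(Zstar - Zstar * Z) i j|) =
      2 * ∑ i, ∑ j, if c i ≠ c j then |Z i j| else 0 := by
  set G : Fin K → Finset (Fin n) := fun k => univ.filter fun l => c l = k with hG
  set N : Fin K → ℝ := fun k => ((G k).card : ℝ) with hN
  have hNpos : ∀ k, 0 < N k := by
    intro k
    obtain ⟨i, hi⟩ := hc k
    have hmem : i ∈ G k := by simp [hG, hi]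
    have h0 : 0 < (G k).card := Finset.card_pos.mpr ⟨i, hmem⟩
    show (0 : ℝ) < ((G k).card : ℝ)
    exact_mod_cast h0
  have hNne : ∀ k, N k ≠ 0 := fun k => (hNpos k).ne'
  have hrowsum : ∀ i, ∑ j, Z i j = 1 := by
    intro i
    have := congrFun hrow i
    simpa [Matrix.mulVec, dotProduct] using this
  have hZsymm : ∀ i j, Z j i = Z i j := fun i j => congrFun (congrFun hsymm i) j
  have hcolsum : ∀ j, ∑ i, Z i j = 1 := by
    intro j
    rw [← hrowsum j]
    exact Finset.sum_congr rfl fun i _ => hZsymm j i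
  set s : Fin n → Fin K → ℝ := fun j k => ∑ l ∈ G k, Z l j with hs
  have hs0 : ∀ j k, 0 ≤ s j k := fun j k => Finset.sum_nonneg fun l _ => hnonneg l j
  have hs1 : ∀ j k, s j k ≤ 1 := by
    intro j k
    rw [← hcolsum j]
    exact Finset.sum_le_sum_of_subset_of_nonneg (Finset.subset_univ _)
      (fun i _ _ => hnonneg i j)
  have hssum : ∀ k, ∑ j, s j k = N k := by
    intro k
    rw [hs]
    simp only
    rw [Finset.sum_comm]
    simp [hrowsum, hN]
  set T : Fin K → ℝ := fun k => ∑ j ∈ G k, s j k with hT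
  have hT_le : ∀ k, T k ≤ N k := by
    intro k
    calc T k ≤ ∑ _j ∈ G k, (1 : ℝ) := Finset.sum_le_sum fun j _ => hs1 j k
    _ = N k := by simp [hN]
  set u : Fin K → Fin K → ℝ := fun k k' => ∑ m ∈ G k', s m k with hu
  have hu0 : ∀ k k', 0 ≤ u k k' := fun k k' => Finset.sum_nonneg fun m _ => hs0 m k
  have husum : ∀ k0, ∑ k, u k0 k = N k0 := by
    intro k0
    have := Finset.sum_fiberwise univ c (fun m => s m k0)
    rw [hu]
    simp only
    rw [show (∑ k, ∑ m ∈ G k, s m k0) = ∑ m, s m k0 from this, hssum]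
  -- Zstar entries
  have hZs : ∀ i j, Zstar i j = if c i = c j then 1 / N (c i) else 0 := fun i j => hZstar i j
  -- Zstar * Z entries
  have hZZ : ∀ i j, (Zstar * Z) i j = s j (c i) / N (c i) := by
    intro i j
    have hterm : ∀ l, Zstar i l * Z l j = if l ∈ G (c i) then Z l j / N (c i) else 0 := by
      intro l
      rw [hZs i l]
      by_cases h : c l = c i
      · rw [if_pos h.symm, if_pos (by simp [hG, h])]
        ring
      · rw [if_neg (fun hh => h hh.symm), if_neg (by simp [hG, h]), zero_mul]
    rw [Matrix.mul_apply, Finset.sum_congr rfl fun l _ => hterm l, Finset.sum_ite_mem,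
      Finset.univ_inter, ← Finset.sum_div]
  -- Zstar * Z * Zstar entries
  have hZZZ : ∀ i j, (Zstar * Z * Zstar) i j = u (c i) (c j) / (N (c i) * N (c j)) := by
    intro i j
    have hterm : ∀ m, (Zstar * Z) i m * Zstar m j =
        if m ∈ G (c j) then s m (c i) / (N (c i) * N (c j)) else 0 := by
      intro m
      rw [hZZ i m, hZs m j]
      by_cases h : c m = c j
      · rw [if_pos h, if_pos (by simp [hG, h]), h]
        ring
      · rw [if_neg h, if_neg (by simp [hG, h]), mul_zero]
    rw [Matrix.mul_apply, Finset.sum_congr rfl fun m _ => hterm m, Finset.sum_ite_mem,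
      Finset.univ_inter, ← Finset.sum_div]
  -- entries of Zstar - Zstar * Z and absolute values
  have habsA : ∀ i j, |(Zstar - Zstar * Z) i j| =
      (if c i = c j then 1 - s j (c i) else s j (c i)) / N (c i) := by
    intro i j
    have hA : (Zstar - Zstar * Z) i j = ((if c i = c j then 1 else 0) - s j (c i)) / N (c i) := by
      rw [Matrix.sub_apply, hZs i j, hZZ i j]
      by_cases h : c i = c j
      · rw [if_pos h, if_pos h]; ring
      · rw [if_neg h, if_neg h]; ring
    rw [hA]
    by_cases h : c i = c j
    · rw [if_pos h, if_pos h, abs_of_nonneg]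
      exact div_nonneg (by linarith [hs1 j (c i)]) (hNpos (c i)).le
    · rw [if_neg h, if_neg h, zero_sub, neg_div, abs_neg, abs_of_nonneg]
      exact div_nonneg (hs0 j (c i)) (hNpos (c i)).le
  -- absolute values for Zstar - Zstar*Z*Zstar
  have habsB : ∀ i j, |(Zstar - Zstar * Z * Zstar) i j| =
      (if c i = c j then (N (c i) - T (c i)) / (N (c i))^2
        else u (c i) (c j) / (N (c i) * N (c j))) := by
    intro i j
    rw [Matrix.sub_apply, hZs i j, hZZZ i j]
    by_cases h : c i = c j
    · rw [if_pos h, if_pos h, ← h]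
      have huT : u (c i) (c i) = T (c i) := rfl
      rw [huT]
      have : 1 / N (c i) - T (c i) / (N (c i) * N (c i)) = (N (c i) - T (c i)) / (N (c i))^2 := by
        rw [pow_two, ← div_sub_div_same, div_mul_cancel_left₀ (hNne (c i)), one_div]
      rw [this, abs_of_nonneg]
      exact div_nonneg (by linarith [hT_le (c i)]) (sq_nonneg _)
    · rw [if_neg h, if_neg h, zero_sub, abs_neg, abs_of_nonneg]
      exact div_nonneg (hu0 _ _) (mul_nonneg (hNpos _).le (hNpos _).le)
  -- row sums
  have rowA : ∀ i, ∑ j, |(Zstar - Zstar * Z) i j| = 2 * (N (c i) - T (c i)) / N (c i) := by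
    intro i
    rw [Finset.sum_congr rfl fun j _ => habsA i j, ← Finset.sum_div]
    congr 1
    have hterm : ∀ j, (if c i = c j then 1 - s j (c i) else s j (c i)) =
        (if c j = c i then 1 - 2 * s j (c i) else 0) + s j (c i) := by
      intro j
      by_cases h : c i = c j
      · rw [if_pos h, if_pos h.symm]; ring
      · rw [if_neg h, if_neg (fun hh => h hh.symm)]; ring
    rw [Finset.sum_congr rfl fun j _ => hterm j, Finset.sum_add_distrib, ← Finset.sum_filter,
      show (filter (fun j => c j = c i) univ) = G (c i) from rfl, hssum,
      Finset.sum_sub_distrib, Finset.sum_const, ← Finset.mul_sum,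
      show (∑ j ∈ G (c i), s j (c i)) = T (c i) from rfl, nsmul_eq_mul, mul_one,
      show ((G (c i)).card : ℝ) = N (c i) from rfl]
    ring
  have rowB : ∀ i, ∑ j, |(Zstar - Zstar * Z * Zstar) i j| = 2 * (N (c i) - T (c i)) / N (c i) := by
    intro i
    rw [Finset.sum_congr rfl fun j _ => habsB i j]
    rw [fiber_sum c (fun k => if c i = k then (N (c i) - T (c i)) / (N (c i))^2
      else u (c i) k / (N (c i) * N k))]
    rw [Finset.sum_eq_add_sum_sdiff_singleton_of_mem (Finset.mem_univ (c i))]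
    have hdiff1 : ∀ k ∈ univ \ {c i},
        ((univ.filter fun l => c l = k).card : ℝ) *
          (if c i = k then (N (c i) - T (c i)) / (N (c i))^2
            else u (c i) k / (N (c i) * N k)) = u (c i) k / N (c i) := by
      intro k hk
      have hkne : c i ≠ k := fun hh =>
        (Finset.mem_sdiff.mp hk).2 (Finset.mem_singleton.mpr hh.symm)
      rw [if_neg hkne, show ((univ.filter fun l => c l = k).card : ℝ) = N k from rfl,
        ← div_div, mul_comm, div_mul_cancel₀ _ (hNne k)]
    rw [Finset.sum_congr rfl hdiff1, if_pos rfl, ← Finset.sum_div,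
      show ((univ.filter fun l => c l = c i).card : ℝ) = N (c i) from rfl]
    have hdsum : ∑ k ∈ univ \ {c i}, u (c i) k = N (c i) - T (c i) := by
      have h1 := Finset.sum_eq_add_sum_sdiff_singleton_of_mem (Finset.mem_univ (c i)) (u (c i))
      have h2 := husum (c i)
      have huT : u (c i) (c i) = T (c i) := rfl
      rw [h1, huT] at h2
      linarith
    rw [hdsum, pow_two, ← div_div,
      mul_comm (N (c i)) ((N (c i) - T (c i)) / N (c i) / N (c i)),
      div_mul_cancel₀ _ (hNne (c i))]
    ring
  -- put it together
  have H1 : (∑ i, ∑ j, |(Zstar - Zstar * Z * Zstar) i j|) =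
      (∑ i, ∑ j, |(Zstar - Zstar * Z) i j|) := by
    refine Finset.sum_congr rfl fun i _ => ?_
    rw [rowA i, rowB i]
  refine ⟨H1, ?_⟩
  have hL : (∑ i, ∑ j, |(Zstar - Zstar * Z) i j|) = ∑ k, 2 * (N k - T k) := by
    rw [Finset.sum_congr rfl fun i _ => rowA i,
      fiber_sum c (fun k => 2 * (N k - T k) / N k)]
    refine Finset.sum_congr rfl fun k _ => ?_
    rw [show ((univ.filter fun l => c l = k).card : ℝ) = N k from rfl,
      mul_comm, div_mul_cancel₀ _ (hNne k)]
  have hR : (∑ i, ∑ j, if c i ≠ c j then |Z i j| else 0) = ∑ k, (N k - T k) := by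
    have hinner : ∀ i, (∑ j, if c i ≠ c j then |Z i j| else 0) =
        1 - ∑ j ∈ G (c i), Z i j := by
      intro i
      have hterm : ∀ j, (if c i ≠ c j then |Z i j| else 0) =
          Z i j - (if c j = c i then Z i j else 0) := by
        intro j
        by_cases h : c i = c j
        · rw [if_neg (by simpa using h), if_pos h.symm]; ring
        · rw [if_pos h, if_neg (fun hh => h hh.symm), abs_of_nonneg (hnonneg i j)]; ring
      rw [Finset.sum_congr rfl fun j _ => hterm j, Finset.sum_sub_distrib, hrowsum,
        ← Finset.sum_filter, show (filter (fun j => c j = c i) univ) = G (c i) from rfl]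
    rw [Finset.sum_congr rfl fun i _ => hinner i,
      ← Finset.sum_fiberwise univ c (fun i => 1 - ∑ j ∈ G (c i), Z i j)]
    refine Finset.sum_congr rfl fun k _ => ?_
    have : ∀ i ∈ univ.filter (fun i => c i = k),
        (1 - ∑ j ∈ G (c i), Z i j) = 1 - ∑ j ∈ G k, Z i j := by
      intro i hi
      rw [(Finset.mem_filter.mp hi).2]
    rw [Finset.sum_congr rfl this, Finset.sum_sub_distrib, Finset.sum_const, nsmul_eq_mul,
      mul_one, show (univ.filter fun i => c i = k) = G k from rfl,
      show ((G k).card : ℝ) = N k from rfl]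
    congr 1
    rw [hT]
    simp only
    rw [Finset.sum_comm]
  rw [hL, hR, Finset.mul_sum]
end

section
/- Let Z* be the membership matrix of a partition of {1,…,n} with minimum cluster size n̲, and let Z ∈ 𝒞 = {Zᵀ = Z, Z ⪰ 0, tr(Z) = K, Z𝟙ₙ = 𝟙ₙ, Z ≥ 0}. Then ‖(I − Z*)Z(I − Z*)‖_tr ≤ |Z* − Z*Z|₁/(2n̲), where ‖·‖_tr is the trace norm and |·|₁ the entrywise ℓ₁ norm. -/
lemma trace_eq_sum_eigs {n : ℕ} {A : Matrix (Fin n) (Fin n) ℝ} (hA : A.IsHermitian) :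
    A.trace = ∑ i, hA.eigenvalues i := by
  simpa using hA.trace_eq_sum_eigenvalues

/-- For the membership matrix `Z*` of a partition (cluster map `c`, minimum cluster size at
least `nmin > 0`) and any `Z` in the K-means SDP feasible set, the trace norm (sum of
absolute values of the eigenvalues of the Hermitian matrix `(I − Z*)Z(I − Z*)`) satisfies
`‖(I − Z*)Z(I − Z*)‖_tr ≤ |Z* − Z*Z|₁ / (2 nmin)`. -/
theorem stmt_15 {n K : ℕ} (c : Fin n → Fin K) (hc : Function.Surjective c)
    (nmin : ℕ) (hnmin : 0 < nmin)
    (hsize : ∀ k : Fin K, nmin ≤ (Finset.univ.filter fun l => c l = k).card)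
    (Zstar : Matrix (Fin n) (Fin n) ℝ)
    (hZstar : ∀ i j, Zstar i j =
      if c i = c j then 1 / ((Finset.univ.filter fun l => c l = c i).card : ℝ) else 0)
    (Z : Matrix (Fin n) (Fin n) ℝ)
    (hsymm : Z.transpose = Z) (hpsd : Z.PosSemidef) (htr : Z.trace = (K : ℝ))
    (hrow : Z.mulVec (fun _ => (1 : ℝ)) = (fun _ => (1 : ℝ)))
    (hnonneg : ∀ i j, 0 ≤ Z i j)
    (hMH : ((1 - Zstar) * Z * (1 - Zstar)).IsHermitian) :
    (∑ i, |hMH.eigenvalues i|) ≤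
      (∑ i, ∑ j, |(Zstar - Zstar * Z) i j|) / (2 * nmin) := by
  classical
  have hZij : ∀ i j, Z j i = Z i j := fun i j => congrFun (congrFun hsymm i) j
  have hZrow : ∀ i, ∑ j, Z i j = 1 := by
    intro i
    have := congrFun hrow i
    simpa [Matrix.mulVec, dotProduct] using this
  have hfpos : ∀ i : Fin n, (0:ℝ) < ((Finset.univ.filter fun l => c l = c i).card : ℝ) := by
    intro i
    exact_mod_cast Finset.card_pos.mpr ⟨i, by simp⟩
  have hPsym : Zstar.transpose = Zstar := by
    ext i j
    rw [Matrix.transpose_apply, hZstar, hZstar]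
    by_cases h : c i = c j
    · rw [if_pos h.symm, if_pos h, h]
    · rw [if_neg (fun hh => h hh.symm), if_neg h]
  have hPP : Zstar * Zstar = Zstar := by
    ext i j
    rw [Matrix.mul_apply, hZstar i j]
    have hterm : ∀ l, Zstar i l * Zstar l j =
        if c l = c i then (if c i = c j then
          (1 / ((Finset.univ.filter fun m => c m = c i).card : ℝ)) *
          (1 / ((Finset.univ.filter fun m => c m = c i).card : ℝ)) else 0) else 0 := by
      intro l
      rw [hZstar, hZstar]
      by_cases h1 : c l = c i
      · rw [if_pos h1, if_pos h1.symm, h1]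
        split_ifs <;> ring
      · rw [if_neg h1, if_neg (fun hh => h1 hh.symm), zero_mul]
    rw [Finset.sum_congr rfl fun l _ => hterm l, ← Finset.sum_filter, Finset.sum_const,
      nsmul_eq_mul]
    by_cases h2 : c i = c j
    · rw [if_pos h2, if_pos h2]
      have := hfpos i
      field_simp
    · rw [if_neg h2, if_neg h2, mul_zero]
  have hProw : ∀ i, ∑ j, Zstar i j = 1 := by
    intro i
    have hterm : ∀ j, Zstar i j =
        if c j = c i then 1 / ((Finset.univ.filter fun l => c l = c i).card : ℝ) else 0 := by
      intro j; rw [hZstar]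
      by_cases h : c i = c j
      · rw [if_pos h, if_pos h.symm]
      · rw [if_neg h, if_neg fun hh => h hh.symm]
    rw [Finset.sum_congr rfl fun j _ => hterm j, ← Finset.sum_filter, Finset.sum_const,
      nsmul_eq_mul]
    have := hfpos i
    field_simp
  have hconj : (1 - Zstar).conjTranspose = 1 - Zstar := by
    have h0 : (1 - Zstar).conjTranspose = (1 - Zstar).transpose := rfl
    rw [h0, Matrix.transpose_sub, Matrix.transpose_one, hPsym]
  have hMpsd : ((1 - Zstar) * Z * (1 - Zstar)).PosSemidef := by
    have h := hpsd.mul_mul_conjTranspose_same (1 - Zstar)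
    rwa [hconj] at h
  have hLHS : (∑ i, |hMH.eigenvalues i|) = Z.trace - (Zstar * Z).trace := by
    have h1 : (∑ i, |hMH.eigenvalues i|) = ∑ i, hMH.eigenvalues i :=
      Finset.sum_congr rfl fun i _ => abs_of_nonneg (hMpsd.eigenvalues_nonneg i)
    rw [h1, ← trace_eq_sum_eigs hMH]
    have e : (1 - Zstar) * Z * (1 - Zstar) = Z - Zstar * Z - Z * Zstar + Zstar * Z * Zstar := by
      noncomm_ring
    rw [e, Matrix.trace_add, Matrix.trace_sub, Matrix.trace_sub,
      Matrix.trace_mul_comm Z Zstar,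
      Matrix.trace_mul_comm (Zstar * Z) Zstar, ← Matrix.mul_assoc, hPP]
    ring
  set ρ : Fin n → ℝ := fun i => ∑ j ∈ Finset.univ.filter fun j => ¬ c j = c i, Z i j with hρ
  set W : Fin K → ℝ := fun k => ∑ j ∈ Finset.univ.filter fun j => ¬ c j = k,
      ∑ l ∈ Finset.univ.filter fun l => c l = k, Z l j with hW
  have hfib : ∀ g : Fin K → ℝ,
      (∑ i, g (c i) / ((Finset.univ.filter fun l => c l = c i).card : ℝ)) = ∑ k, g k := by
    intro g
    rw [← Finset.sum_fiberwise_of_maps_to (g := c) (fun i _ => Finset.mem_univ (c i))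
        (fun i => g (c i) / ((Finset.univ.filter fun l => c l = c i).card : ℝ))]
    refine Finset.sum_congr rfl fun k _ => ?_
    have hcongr2 : ∀ i ∈ Finset.univ.filter fun i => c i = k,
        g (c i) / ((Finset.univ.filter fun l => c l = c i).card : ℝ)
          = g k / ((Finset.univ.filter fun l => c l = k).card : ℝ) := by
      intro i hi
      rw [(Finset.mem_filter.mp hi).2]
    rw [Finset.sum_congr rfl hcongr2, Finset.sum_const, nsmul_eq_mul]
    obtain ⟨i0, hi0⟩ := hc k
    have hpos : (0:ℝ) < ((Finset.univ.filter fun l => c l = k).card : ℝ) := by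
      exact_mod_cast Finset.card_pos.mpr ⟨i0, by simp [hi0]⟩
    field_simp
  have htrPZ : (Zstar * Z).trace
      = ∑ i, (1 - ρ i) / ((Finset.univ.filter fun l => c l = c i).card : ℝ) := by
    rw [Matrix.trace]
    refine Finset.sum_congr rfl fun i _ => ?_
    have hterm : ∀ l, Zstar i l * Z l i =
        if c l = c i then Z i l / ((Finset.univ.filter fun l => c l = c i).card : ℝ) else 0 := by
      intro l
      rw [hZstar]
      by_cases h : c l = c i
      · rw [if_pos h.symm, if_pos h, hZij i l]; ring
      · rw [if_neg (fun hh => h hh.symm), if_neg h, zero_mul]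
    rw [Matrix.diag_apply, Matrix.mul_apply, Finset.sum_congr rfl fun l _ => hterm l,
      ← Finset.sum_filter, ← Finset.sum_div]
    congr 1
    have hsplit := Finset.sum_filter_add_sum_filter_not Finset.univ
      (fun l => c l = c i) (fun l => Z i l)
    have hz := hZrow i
    simp only [hρ]
    linarith
  have hρnonneg : ∀ i, 0 ≤ ρ i := fun i => Finset.sum_nonneg fun j _ => hnonneg i j
  have hmain1 : Z.trace - (Zstar * Z).trace
      = ∑ i, ρ i / ((Finset.univ.filter fun l => c l = c i).card : ℝ) := by
    rw [htrPZ, htr]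
    have h1 : (∑ i, (1 - ρ i) / ((Finset.univ.filter fun l => c l = c i).card : ℝ))
        = (∑ i, (1:ℝ) / ((Finset.univ.filter fun l => c l = c i).card : ℝ))
          - ∑ i, ρ i / ((Finset.univ.filter fun l => c l = c i).card : ℝ) := by
      rw [← Finset.sum_sub_distrib]
      exact Finset.sum_congr rfl fun i _ => by ring
    have h2 := hfib (fun _ => (1:ℝ))
    rw [h1, h2]
    simp
  have hT1 : Z.trace - (Zstar * Z).trace ≤ (∑ i, ρ i) / (nmin : ℝ) := by
    rw [hmain1, Finset.sum_div]
    refine Finset.sum_le_sum fun i _ => ?_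
    have hle : (nmin : ℝ) ≤ ((Finset.univ.filter fun l => c l = c i).card : ℝ) := by
      exact_mod_cast hsize (c i)
    gcongr
    exact hρnonneg i
  have hAentry : ∀ i j, (Zstar - Zstar * Z) i j =
      (if c j = c i then (1:ℝ) / ((Finset.univ.filter fun l => c l = c i).card : ℝ) else 0)
        - (∑ l ∈ Finset.univ.filter fun l => c l = c i, Z l j)
            / ((Finset.univ.filter fun l => c l = c i).card : ℝ) := by
    intro i j
    rw [Matrix.sub_apply, Matrix.mul_apply, hZstar i j]
    congr 1
    · by_cases h : c i = c j
      · rw [if_pos h, if_pos h.symm]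
      · rw [if_neg h, if_neg fun hh => h hh.symm]
    · have hterm : ∀ l, Zstar i l * Z l j =
          if c l = c i then Z l j / ((Finset.univ.filter fun m => c m = c i).card : ℝ) else 0 := by
        intro l
        rw [hZstar]
        by_cases h : c l = c i
        · rw [if_pos h.symm, if_pos h]; ring
        · rw [if_neg (fun hh => h hh.symm), if_neg h, zero_mul]
      rw [Finset.sum_congr rfl fun l _ => hterm l, ← Finset.sum_filter, ← Finset.sum_div]
  have hArow : ∀ i, ∑ j, (Zstar - Zstar * Z) i j = 0 := by
    intro i
    simp only [Matrix.sub_apply]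
    rw [Finset.sum_sub_distrib, hProw i]
    have h2 : ∑ j, (Zstar * Z) i j = 1 := by
      simp only [Matrix.mul_apply]
      rw [Finset.sum_comm]
      have hl : ∀ l, (∑ j, Zstar i l * Z l j) = Zstar i l := fun l => by
        rw [← Finset.mul_sum, hZrow l, mul_one]
      rw [Finset.sum_congr rfl fun l _ => hl l, hProw i]
    rw [h2]; ring
  have hrowineq : ∀ i, 2 * (W (c i) / ((Finset.univ.filter fun l => c l = c i).card : ℝ))
      ≤ ∑ j, |(Zstar - Zstar * Z) i j| := by
    intro i
    have hf := hfpos i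
    have hsplitabs := Finset.sum_filter_add_sum_filter_not Finset.univ
      (fun j => c j = c i) (fun j => |(Zstar - Zstar * Z) i j|)
    have hsplit0 := Finset.sum_filter_add_sum_filter_not Finset.univ
      (fun j => c j = c i) (fun j => (Zstar - Zstar * Z) i j)
    have hoffval : ∀ j ∈ Finset.univ.filter (fun j => ¬ c j = c i),
        (Zstar - Zstar * Z) i j
          = -((∑ l ∈ Finset.univ.filter fun l => c l = c i, Z l j)
              / ((Finset.univ.filter fun l => c l = c i).card : ℝ)) := by
      intro j hj
      rw [hAentry i j, if_neg (Finset.mem_filter.mp hj).2]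
      ring
    have hwnn : ∀ j, 0 ≤ (∑ l ∈ Finset.univ.filter fun l => c l = c i, Z l j)
        / ((Finset.univ.filter fun l => c l = c i).card : ℝ) := fun j =>
      div_nonneg (Finset.sum_nonneg fun l _ => hnonneg l j) hf.le
    have hoffabs : ∑ j ∈ Finset.univ.filter (fun j => ¬ c j = c i), |(Zstar - Zstar * Z) i j|
        = ∑ j ∈ Finset.univ.filter (fun j => ¬ c j = c i),
            (∑ l ∈ Finset.univ.filter fun l => c l = c i, Z l j)
              / ((Finset.univ.filter fun l => c l = c i).card : ℝ) := by
      refine Finset.sum_congr rfl fun j hj => ?_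
      rw [hoffval j hj, abs_neg, abs_of_nonneg (hwnn j)]
    have hoff0 : ∑ j ∈ Finset.univ.filter (fun j => ¬ c j = c i), (Zstar - Zstar * Z) i j
        = -∑ j ∈ Finset.univ.filter (fun j => ¬ c j = c i),
            (∑ l ∈ Finset.univ.filter fun l => c l = c i, Z l j)
              / ((Finset.univ.filter fun l => c l = c i).card : ℝ) := by
      rw [Finset.sum_congr rfl hoffval, Finset.sum_neg_distrib]
    have hinabs : ∑ j ∈ Finset.univ.filter (fun j => c j = c i), (Zstar - Zstar * Z) i j
        ≤ ∑ j ∈ Finset.univ.filter (fun j => c j = c i), |(Zstar - Zstar * Z) i j| :=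
      Finset.sum_le_sum fun j _ => le_abs_self _
    have hWfi : W (c i) / ((Finset.univ.filter fun l => c l = c i).card : ℝ)
        = ∑ j ∈ Finset.univ.filter (fun j => ¬ c j = c i),
            (∑ l ∈ Finset.univ.filter fun l => c l = c i, Z l j)
              / ((Finset.univ.filter fun l => c l = c i).card : ℝ) := by
      rw [hW]
      simp only
      rw [Finset.sum_div]
    rw [hWfi]
    have hA0 := hArow i
    linarith [hsplitabs, hsplit0, hinabs, hoffabs, hoff0, hA0]
  have e2 : ∑ i, ρ i = ∑ k, W k := by
    rw [← Finset.sum_fiberwise_of_maps_to (g := c) (fun i (_ : i ∈ Finset.univ) =>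
      Finset.mem_univ (c i)) ρ]
    refine Finset.sum_congr rfl fun k _ => ?_
    have h1 : ∀ l ∈ Finset.univ.filter (fun l => c l = k),
        ρ l = ∑ j ∈ Finset.univ.filter (fun j => ¬ c j = k), Z l j := by
      intro l hl
      have hlk : c l = k := (Finset.mem_filter.mp hl).2
      rw [hρ]
      simp only
      rw [hlk]
    rw [Finset.sum_congr rfl h1, hW]
    simp only
    rw [Finset.sum_comm]
  have e1 := hfib W
  have hsum2 : 2 * (∑ i, ρ i) ≤ ∑ i, ∑ j, |(Zstar - Zstar * Z) i j| := by
    calc 2 * (∑ i, ρ i)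
        = ∑ i, 2 * (W (c i) / ((Finset.univ.filter fun l => c l = c i).card : ℝ)) := by
          rw [← Finset.mul_sum, e1, e2]
      _ ≤ _ := Finset.sum_le_sum fun i _ => hrowineq i
  rw [hLHS]
  have h2nmin : (0:ℝ) < 2 * (nmin : ℝ) := by positivity
  calc Z.trace - (Zstar * Z).trace ≤ (∑ i, ρ i) / (nmin : ℝ) := hT1
    _ = (2 * ∑ i, ρ i) / (2 * (nmin : ℝ)) := by
        rw [mul_div_mul_left _ _ (two_ne_zero)]
    _ ≤ (∑ i, ∑ j, |(Zstar - Zstar * Z) i j|) / (2 * (nmin : ℝ)) :=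
        (div_le_div_iff_of_pos_right h2nmin).mpr hsum2
end

section
/- Let Z* be the membership matrix of a partition of {1,…,n} with minimum cluster size n̲, and let Z ∈ 𝒞 = {Zᵀ = Z, Z ⪰ 0, tr(Z) = K, Z𝟙ₙ = 𝟙ₙ, Z ≥ 0}. Then |Z* − Z*Z|₁ ≤ |Z* − Z|₁ ≤ (2n/n̲)·|Z* − Z*Z|₁. -/
/-- For the membership matrix `Z*` of a partition of `{1,…,n}` with minimum cluster size at
least `nmin > 0`, and any `Z` in the K-means SDP feasible set,
`|Z* − Z*Z|₁ ≤ |Z* − Z|₁ ≤ (2n/nmin)|Z* − Z*Z|₁`. -/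
theorem stmt_16 {n K : ℕ} (c : Fin n → Fin K) (hc : Function.Surjective c)
    (nmin : ℕ) (hnmin : 0 < nmin)
    (hsize : ∀ k : Fin K, nmin ≤ (Finset.univ.filter fun l => c l = k).card)
    (Zstar : Matrix (Fin n) (Fin n) ℝ)
    (hZstar : ∀ i j, Zstar i j =
      if c i = c j then 1 / ((Finset.univ.filter fun l => c l = c i).card : ℝ) else 0)
    (Z : Matrix (Fin n) (Fin n) ℝ)
    (hsymm : Z.transpose = Z) (hpsd : Z.PosSemidef) (htr : Z.trace = (K : ℝ))
    (hrow : Z.mulVec (fun _ => (1 : ℝ)) = (fun _ => (1 : ℝ)))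
    (hnonneg : ∀ i j, 0 ≤ Z i j) :
    (∑ i, ∑ j, |(Zstar - Zstar * Z) i j|) ≤ (∑ i, ∑ j, |(Zstar - Z) i j|) ∧
    (∑ i, ∑ j, |(Zstar - Z) i j|) ≤
      (2 * n / nmin : ℝ) * ∑ i, ∑ j, |(Zstar - Zstar * Z) i j| := by
  classical
  set G : Fin K → Finset (Fin n) := fun k => Finset.univ.filter fun l => c l = k with hGdef
  set m : Fin K → ℝ := fun k => ((G k).card : ℝ) with hmdef
  have hmval : ∀ k, ((G k).card : ℝ) = m k := fun k => rfl
  have hmge : ∀ k, (nmin : ℝ) ≤ m k := by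
    intro k
    have h : (nmin : ℝ) ≤ ((G k).card : ℝ) := by exact_mod_cast hsize k
    exact h
  have hmpos : ∀ k, 0 < m k := fun k =>
    lt_of_lt_of_le (by exact_mod_cast hnmin) (hmge k)
  have hZs : ∀ i j, Zstar i j = if c i = c j then 1 / m (c i) else 0 := hZstar
  have hZsym : ∀ i j, Z i j = Z j i := by
    intro i j
    have := congrFun (congrFun hsymm j) i
    rwa [Matrix.transpose_apply] at this
  have hrowsum : ∀ i, ∑ j, Z i j = 1 := by
    intro i
    have := congrFun hrow i
    simpa [Matrix.mulVec, dotProduct] using this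
  have hcolsum : ∀ j, ∑ l, Z l j = 1 := by
    intro j
    rw [Finset.sum_congr rfl fun l _ => hZsym l j]
    exact hrowsum j
  set s : Fin K → Fin n → ℝ := fun k j => ∑ l ∈ G k, Z l j with hsdef
  have hs_nonneg : ∀ k j, 0 ≤ s k j := fun k j =>
    Finset.sum_nonneg fun l _ => hnonneg l j
  have hs_le_one : ∀ k j, s k j ≤ 1 := by
    intro k j
    calc s k j ≤ ∑ l, Z l j :=
          Finset.sum_le_sum_of_subset_of_nonneg (Finset.subset_univ _)
            (fun l _ _ => hnonneg l j)
      _ = 1 := hcolsum j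
  -- membership in fibers
  have hmemG : ∀ (k) (i : Fin n), i ∈ G k ↔ c i = k := by
    intro k i; simp [hGdef]
  -- product formula
  have hmul : ∀ i j, (Zstar * Z) i j = s (c i) j / m (c i) := by
    intro i j
    rw [Matrix.mul_apply]
    have key : ∀ l, Zstar i l * Z l j =
        if c l = c i then (1 / m (c i)) * Z l j else 0 := by
      intro l
      rw [hZs i l]
      by_cases h : c l = c i
      · rw [if_pos h.symm, if_pos h]
      · rw [if_neg (fun hh => h hh.symm), if_neg h, zero_mul]
    rw [Finset.sum_congr rfl fun l _ => key l, ← Finset.sum_filter, ← Finset.mul_sum]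
    show 1 / m (c i) * s (c i) j = s (c i) j / m (c i)
    rw [one_div_mul_eq_div]
  -- entrywise absolute values
  have habs1 : ∀ i j, |(Zstar - Z) i j| =
      if c i = c j then |1 / m (c i) - Z i j| else Z i j := by
    intro i j
    rw [Matrix.sub_apply, hZs]
    by_cases h : c i = c j
    · rw [if_pos h, if_pos h]
    · rw [if_neg h, if_neg h, zero_sub, abs_neg, abs_of_nonneg (hnonneg i j)]
  have habs2 : ∀ i j, |(Zstar - Zstar * Z) i j| =
      (if c i = c j then 1 - s (c i) j else s (c i) j) / m (c i) := by
    intro i j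
    rw [Matrix.sub_apply, hZs, hmul]
    by_cases h : c i = c j
    · rw [if_pos h, if_pos h, div_sub_div_same]
      exact abs_of_nonneg (div_nonneg (by linarith [hs_le_one (c i) j]) (hmpos _).le)
    · rw [if_neg h, if_neg h, zero_sub, abs_neg]
      exact abs_of_nonneg (div_nonneg (hs_nonneg _ _) (hmpos _).le)
  have hssum : ∀ j, ∑ k, s k j = 1 := by
    intro j
    have h : ∑ k, ∑ l ∈ Finset.univ.filter (fun l => c l = k), Z l j = ∑ l, Z l j :=
      Finset.sum_fiberwise Finset.univ c (fun l => Z l j)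
    calc ∑ k, s k j = ∑ l, Z l j := h
      _ = 1 := hcolsum j
  set OUT : ℝ := ∑ j, (1 - s (c j) j) with hOUTdef
  have hOUT_nonneg : 0 ≤ OUT :=
    Finset.sum_nonneg fun j _ => by linarith [hs_le_one (c j) j]
  -- total sum formula for |Zstar - Zstar*Z|
  have hsum2 : (∑ i, ∑ j, |(Zstar - Zstar * Z) i j|) = 2 * OUT := by
    rw [Finset.sum_comm, hOUTdef, Finset.mul_sum]
    apply Finset.sum_congr rfl
    intro j _
    rw [Finset.sum_congr rfl fun i _ => habs2 i j]
    have hfib : ∑ i : Fin n,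
        (if c i = c j then 1 - s (c i) j else s (c i) j) / m (c i)
        = ∑ k, ∑ i ∈ Finset.univ.filter (fun i => c i = k),
            (if c i = c j then 1 - s (c i) j else s (c i) j) / m (c i) :=
      (Finset.sum_fiberwise Finset.univ c _).symm
    rw [hfib]
    have hinner : ∀ k, (∑ i ∈ Finset.univ.filter (fun i => c i = k),
        (if c i = c j then 1 - s (c i) j else s (c i) j) / m (c i))
        = (if k = c j then 1 - s k j else s k j) := by
      intro k
      have hconst : ∀ i ∈ Finset.univ.filter (fun i => c i = k),
          (if c i = c j then 1 - s (c i) j else s (c i) j) / m (c i)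
            = (if k = c j then 1 - s k j else s k j) / m k := by
        intro i hi
        have hci : c i = k := (Finset.mem_filter.1 hi).2
        rw [hci]
      rw [Finset.sum_congr rfl hconst, Finset.sum_const, nsmul_eq_mul]
      have hcard : ((Finset.univ.filter (fun i => c i = k)).card : ℝ) = m k := hmval k
      rw [hcard, mul_div_assoc', mul_comm, ← mul_div_assoc', div_self (hmpos k).ne', mul_one]
    rw [Finset.sum_congr rfl fun k _ => hinner k]
    have hsplit : ∀ k : Fin K, (if k = c j then 1 - s k j else s k j)
        = s k j + (if k = c j then 1 - 2 * s k j else 0) := by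
      intro k; by_cases h : k = c j
      · rw [if_pos h, if_pos h]; ring
      · rw [if_neg h, if_neg h]; ring
    rw [Finset.sum_congr rfl fun k _ => hsplit k, Finset.sum_add_distrib, hssum j,
      Finset.sum_ite_eq' Finset.univ (c j) (fun k => 1 - 2 * s k j),
      if_pos (Finset.mem_univ _)]
    ring
  -- total sum formula for |Zstar - Z|
  have hconstsum : ∀ k j, ∑ i ∈ G k, (1 / m k - Z i j) = 1 - s k j := by
    intro k j
    rw [Finset.sum_sub_distrib, Finset.sum_const, nsmul_eq_mul, hmval, mul_one_div,
      div_self (hmpos k).ne']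
  have hsum1 : (∑ i, ∑ j, |(Zstar - Z) i j|) =
      (∑ j, ∑ i ∈ G (c j), |1 / m (c j) - Z i j|) + OUT := by
    rw [Finset.sum_comm, hOUTdef, ← Finset.sum_add_distrib]
    apply Finset.sum_congr rfl
    intro j _
    rw [Finset.sum_congr rfl fun i _ => habs1 i j]
    rw [← Finset.sum_filter_add_sum_filter_not Finset.univ (fun i => c i = c j)]
    have h1 : ∑ i ∈ Finset.univ.filter (fun i => c i = c j),
        (if c i = c j then |1 / m (c i) - Z i j| else Z i j)
        = ∑ i ∈ G (c j), |1 / m (c j) - Z i j| := by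
      apply Finset.sum_congr rfl
      intro i hi
      have hci : c i = c j := (Finset.mem_filter.1 hi).2
      rw [if_pos hci, hci]
    have h2 : ∑ i ∈ Finset.univ.filter (fun i => ¬ c i = c j),
        (if c i = c j then |1 / m (c i) - Z i j| else Z i j)
        = 1 - s (c j) j := by
      have e1 : ∑ i ∈ Finset.univ.filter (fun i => ¬ c i = c j),
          (if c i = c j then |1 / m (c i) - Z i j| else Z i j)
          = ∑ i ∈ Finset.univ.filter (fun i => ¬ c i = c j), Z i j := by
        apply Finset.sum_congr rfl
        intro i hi
        exact if_neg (Finset.mem_filter.1 hi).2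
      have e2 := Finset.sum_filter_add_sum_filter_not Finset.univ
        (fun i => c i = c j) (fun i => Z i j)
      have e3 : ∑ i ∈ Finset.univ.filter (fun i => c i = c j), Z i j = s (c j) j := rfl
      rw [hcolsum j] at e2
      rw [e1]
      linarith [e2, e3.symm ▸ e2]
    rw [h1, h2]
  -- |a| = a + 2 max(-a) 0
  have habs_pp : ∀ a : ℝ, |a| = a + 2 * max (-a) 0 := by
    intro a
    rcases le_or_gt 0 a with h | h
    · rw [abs_of_nonneg h, max_eq_right (by linarith), mul_zero, add_zero]
    · rw [abs_of_neg h, max_eq_left (by linarith)]; ring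
  set T : ℝ := ∑ j, ∑ i ∈ G (c j), max (Z i j - 1 / m (c j)) 0 with hTdef
  have hT_nonneg : 0 ≤ T :=
    Finset.sum_nonneg fun j _ => Finset.sum_nonneg fun i _ => le_max_right _ _
  have hINj : ∀ j, (∑ i ∈ G (c j), |1 / m (c j) - Z i j|)
      = (1 - s (c j) j) + 2 * ∑ i ∈ G (c j), max (Z i j - 1 / m (c j)) 0 := by
    intro j
    have e : ∀ i, |1 / m (c j) - Z i j|
        = (1 / m (c j) - Z i j) + 2 * max (Z i j - 1 / m (c j)) 0 := by
      intro i
      have := habs_pp (1 / m (c j) - Z i j)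
      rwa [neg_sub] at this
    rw [Finset.sum_congr rfl fun i _ => e i, Finset.sum_add_distrib, hconstsum,
      ← Finset.mul_sum]
  have hLHS : (∑ i, ∑ j, |(Zstar - Z) i j|) = 2 * OUT + 2 * T := by
    rw [hsum1, Finset.sum_congr rfl fun j (_ : j ∈ Finset.univ) => hINj j,
      Finset.sum_add_distrib, ← Finset.mul_sum, ← hOUTdef, ← hTdef]
    ring
  -- square root of Z
  obtain ⟨R, hRsym, hRZ⟩ : ∃ R : Matrix (Fin n) (Fin n) ℝ,
      (∀ a b, R a b = R b a) ∧ ∀ a b, Z a b = ∑ q, R a q * R q b := by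
    open scoped MatrixOrder in refine ⟨CFC.sqrt Z, ?_, ?_⟩
    · intro a b
      open scoped MatrixOrder in have h := (Matrix.nonneg_iff_posSemidef.mp (CFC.sqrt_nonneg Z)).isHermitian.apply b a
      simpa using h
    · intro a b
      open scoped MatrixOrder in conv_lhs => rw [← CFC.sqrt_mul_sqrt_self Z hpsd.nonneg]
      rw [Matrix.mul_apply]
  -- Cauchy-Schwarz : (s k i)^2 ≤ Z i i * m k
  have hkey : ∀ k i, (s k i) ^ 2 ≤ Z i i * m k := by
    intro k i
    have h1 : s k i = ∑ q, (∑ l ∈ G k, R l q) * R q i := by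
      show ∑ l ∈ G k, Z l i = _
      rw [Finset.sum_congr rfl fun l _ => hRZ l i, Finset.sum_comm]
      exact Finset.sum_congr rfl fun q _ => (Finset.sum_mul _ _ _).symm
    have hcs := Finset.sum_mul_sq_le_sq_mul_sq Finset.univ
      (fun q => ∑ l ∈ G k, R l q) (fun q => R q i)
    have ha : ∑ q, (R q i) ^ 2 = Z i i := by
      rw [hRZ i i]
      exact Finset.sum_congr rfl fun q _ => by rw [sq, hRsym q i]
    have hb : ∑ q, (∑ l ∈ G k, R l q) ^ 2 = ∑ l ∈ G k, s k l := by
      have e1 : ∀ q, (∑ l ∈ G k, R l q) ^ 2 = ∑ l ∈ G k, ∑ p ∈ G k, R l q * R p q := by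
        intro q
        rw [sq, Finset.sum_mul_sum]
      rw [Finset.sum_congr rfl fun q _ => e1 q, Finset.sum_comm]
      have e2 : ∀ l, ∑ q, ∑ p ∈ G k, R l q * R p q = ∑ p ∈ G k, Z l p := by
        intro l
        rw [Finset.sum_comm]
        apply Finset.sum_congr rfl
        intro p _
        rw [hRZ l p]
        exact Finset.sum_congr rfl fun q _ => by rw [hRsym p q]
      rw [Finset.sum_congr rfl fun l (_ : l ∈ G k) => e2 l, Finset.sum_comm]
    have hSk : ∑ l ∈ G k, s k l ≤ m k := by
      calc ∑ l ∈ G k, s k l ≤ ∑ l ∈ G k, 1 :=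
            Finset.sum_le_sum fun l _ => hs_le_one k l
        _ = m k := by rw [Finset.sum_const, nsmul_eq_mul, mul_one, hmval]
    have hZii : 0 ≤ Z i i := hnonneg i i
    calc (s k i) ^ 2 = (∑ q, (∑ l ∈ G k, R l q) * R q i) ^ 2 := by rw [h1]
      _ ≤ (∑ q, (∑ l ∈ G k, R l q) ^ 2) * ∑ q, (R q i) ^ 2 := hcs
      _ = (∑ l ∈ G k, s k l) * Z i i := by rw [ha, hb]
      _ ≤ m k * Z i i := mul_le_mul_of_nonneg_right hSk hZii
      _ = Z i i * m k := mul_comm _ _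
  -- diagonal lower bound, multiplied form
  have hB' : ∀ k i, m k * max (1 / m k - Z i i) 0 ≤ 2 * (1 - s k i) := by
    intro k i
    have hm := hmpos k
    have hs1 := hs_le_one k i
    rcases le_or_gt (1 / m k - Z i i) 0 with h | h
    · rw [max_eq_right h, mul_zero]
      linarith
    · rw [max_eq_left h.le]
      have e : m k * (1 / m k - Z i i) = 1 - Z i i * m k := by
        field_simp
      rw [e]
      nlinarith [hkey k i, sq_nonneg (1 - s k i)]
  -- entry vs diagonal bound
  have hZle : ∀ i j, Z i j ≤ (Z i i + Z j j) / 2 := by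
    intro i j
    have hq : ∀ q : Fin n, R i q * R q j ≤ (R i q * R q i + R j q * R q j) / 2 := by
      intro q
      rw [hRsym q j, hRsym q i]
      nlinarith [sq_nonneg (R i q - R j q)]
    calc Z i j = ∑ q, R i q * R q j := hRZ i j
      _ ≤ ∑ q, (R i q * R q i + R j q * R q j) / 2 := Finset.sum_le_sum fun q _ => hq q
      _ = (Z i i + Z j j) / 2 := by
        rw [← Finset.sum_div, Finset.sum_add_distrib, ← hRZ i i, ← hRZ j j]
  -- positive-part comparison
  have hppij : ∀ (k : Fin K) (i j : Fin n), max (Z i j - 1 / m k) 0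
      ≤ (max (Z i i - 1 / m k) 0 + max (Z j j - 1 / m k) 0) / 2 := by
    intro k i j
    apply max_le
    · have h1 := le_max_left (Z i i - 1 / m k) 0
      have h2 := le_max_left (Z j j - 1 / m k) 0
      have h3 := hZle i j
      linarith
    · have h1 := le_max_right (Z i i - 1 / m k) 0
      have h2 := le_max_right (Z j j - 1 / m k) 0
      linarith
  -- A and B sums
  have hA_nonneg : ∀ k, 0 ≤ ∑ i ∈ G k, max (Z i i - 1 / m k) 0 :=
    fun k => Finset.sum_nonneg fun i _ => le_max_right _ _
  have hB_nonneg : ∀ k, 0 ≤ ∑ i ∈ G k, max (1 / m k - Z i i) 0 :=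
    fun k => Finset.sum_nonneg fun i _ => le_max_right _ _
  have hAB : ∑ k, (∑ i ∈ G k, max (Z i i - 1 / m k) 0)
      = ∑ k, (∑ i ∈ G k, max (1 / m k - Z i i) 0) := by
    have hdiff : ∀ x : ℝ, max x 0 - max (-x) 0 = x := by
      intro x
      rcases le_or_gt 0 x with h | h
      · rw [max_eq_left h, max_eq_right (by linarith)]; ring
      · rw [max_eq_right h.le, max_eq_left (by linarith)]; ring
    have h1 : ∀ k, (∑ i ∈ G k, max (Z i i - 1 / m k) 0)
        - (∑ i ∈ G k, max (1 / m k - Z i i) 0) = (∑ i ∈ G k, Z i i) - 1 := by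
      intro k
      rw [← Finset.sum_sub_distrib]
      have e : ∀ i, max (Z i i - 1 / m k) 0 - max (1 / m k - Z i i) 0
          = Z i i - 1 / m k := by
        intro i
        have := hdiff (Z i i - 1 / m k)
        rwa [neg_sub] at this
      rw [Finset.sum_congr rfl fun i _ => e i, Finset.sum_sub_distrib,
        Finset.sum_const, nsmul_eq_mul, hmval, mul_one_div, div_self (hmpos k).ne']
    have htrace : ∑ k, ∑ i ∈ G k, Z i i = (K : ℝ) := by
      have h := Finset.sum_fiberwise Finset.univ c (fun i => Z i i)
      have h2 : ∑ i, Z i i = (K : ℝ) := by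
        simpa [Matrix.trace, Matrix.diag] using htr
      calc ∑ k, ∑ i ∈ G k, Z i i = ∑ i, Z i i := h
        _ = (K : ℝ) := h2
    have h2 : ∑ k, ((∑ i ∈ G k, max (Z i i - 1 / m k) 0)
        - (∑ i ∈ G k, max (1 / m k - Z i i) 0)) = 0 := by
      rw [Finset.sum_congr rfl fun k (_ : k ∈ Finset.univ) => h1 k,
        Finset.sum_sub_distrib, htrace, Finset.sum_const, nsmul_eq_mul, mul_one]
      simp
    rw [Finset.sum_sub_distrib] at h2
    linarith
  -- OUT in fibered form
  have hOUT_fiber : OUT = ∑ k, ∑ j ∈ G k, (1 - s k j) := by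
    rw [hOUTdef]
    have h := Finset.sum_fiberwise Finset.univ c (fun j => 1 - s (c j) j)
    rw [← h]
    apply Finset.sum_congr rfl
    intro k _
    apply Finset.sum_congr rfl
    intro j hj
    rw [(Finset.mem_filter.1 hj).2]
  -- big bound : nmin * sum B ≤ 2 * OUT
  have hBig : (nmin : ℝ) * ∑ k, (∑ i ∈ G k, max (1 / m k - Z i i) 0) ≤ 2 * OUT := by
    rw [hOUT_fiber, Finset.mul_sum, Finset.mul_sum]
    apply Finset.sum_le_sum
    intro k _
    calc (nmin : ℝ) * ∑ i ∈ G k, max (1 / m k - Z i i) 0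
        ≤ m k * ∑ i ∈ G k, max (1 / m k - Z i i) 0 :=
          mul_le_mul_of_nonneg_right (hmge k) (hB_nonneg k)
      _ = ∑ i ∈ G k, m k * max (1 / m k - Z i i) 0 := Finset.mul_sum _ _ _
      _ ≤ ∑ i ∈ G k, 2 * (1 - s k i) := Finset.sum_le_sum fun i _ => hB' k i
      _ = 2 * ∑ i ∈ G k, (1 - s k i) := (Finset.mul_sum _ _ _).symm
  -- T in fibered form and the T bound
  have hT_fiber : T = ∑ k, ∑ j ∈ G k, ∑ i ∈ G k, max (Z i j - 1 / m k) 0 := by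
    rw [hTdef]
    have h := Finset.sum_fiberwise Finset.univ c
      (fun j => ∑ i ∈ G (c j), max (Z i j - 1 / m (c j)) 0)
    rw [← h]
    apply Finset.sum_congr rfl
    intro k _
    apply Finset.sum_congr rfl
    intro j hj
    rw [(Finset.mem_filter.1 hj).2]
  have hTle : T ≤ ∑ k, m k * (∑ i ∈ G k, max (Z i i - 1 / m k) 0) := by
    rw [hT_fiber]
    apply Finset.sum_le_sum
    intro k _
    calc ∑ j ∈ G k, ∑ i ∈ G k, max (Z i j - 1 / m k) 0
        ≤ ∑ j ∈ G k, ∑ i ∈ G k,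
            (max (Z i i - 1 / m k) 0 + max (Z j j - 1 / m k) 0) / 2 :=
          Finset.sum_le_sum fun j _ => Finset.sum_le_sum fun i _ => hppij k i j
      _ = m k * (∑ i ∈ G k, max (Z i i - 1 / m k) 0) := by
        have e : ∀ j ∈ G k, ∑ i ∈ G k,
            (max (Z i i - 1 / m k) 0 + max (Z j j - 1 / m k) 0) / 2
            = (∑ i ∈ G k, max (Z i i - 1 / m k) 0) / 2
              + m k * max (Z j j - 1 / m k) 0 / 2 := by
          intro j _
          rw [Finset.sum_congr rfl fun i (_ : i ∈ G k) => add_div _ _ (2:ℝ),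
            Finset.sum_add_distrib, ← Finset.sum_div, Finset.sum_const, nsmul_eq_mul,
            hmval]
          ring
        rw [Finset.sum_congr rfl e, Finset.sum_add_distrib, Finset.sum_const,
          nsmul_eq_mul, hmval]
        rw [Finset.sum_congr rfl fun j (_ : j ∈ G k) =>
          (mul_div_assoc (m k) (max (Z j j - 1 / m k) 0) 2),
          ← Finset.mul_sum, ← Finset.sum_div]
        ring
  -- final assembly
  constructor
  · rw [hsum2, hLHS]
    linarith
  · rw [hsum2, hLHS]
    have hMpos : (0 : ℝ) < nmin := by exact_mod_cast hnmin
    by_cases hK2 : 2 ≤ K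
    · have hmle : ∀ k, m k ≤ (n : ℝ) - nmin := by
        intro k
        obtain ⟨k', hk'⟩ := Fintype.exists_ne_of_one_lt_card (by rw [Fintype.card_fin]; omega) k
        have hdisj : Disjoint (G k) (G k') := by
          rw [Finset.disjoint_left]
          intro a ha ha'
          exact hk' (((hmemG k' a).1 ha').symm.trans ((hmemG k a).1 ha))
        have hcards : (G k).card + (G k').card ≤ n := by
          calc (G k).card + (G k').card = (G k ∪ G k').card :=
                (Finset.card_union_of_disjoint hdisj).symm
            _ ≤ (Finset.univ : Finset (Fin n)).card := Finset.card_le_univ _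
            _ = n := by simp
        have h2 : (nmin : ℝ) ≤ m k' := hmge k'
        have h3 : ((G k).card : ℝ) + ((G k').card : ℝ) ≤ (n : ℝ) := by
          exact_mod_cast hcards
        rw [hmval, hmval] at h3
        linarith
      have hTle2 : T ≤ ((n : ℝ) - nmin) * ∑ k, (∑ i ∈ G k, max (1 / m k - Z i i) 0) := by
        calc T ≤ ∑ k, m k * (∑ i ∈ G k, max (Z i i - 1 / m k) 0) := hTle
          _ ≤ ∑ k, ((n : ℝ) - nmin) * (∑ i ∈ G k, max (Z i i - 1 / m k) 0) :=
            Finset.sum_le_sum fun k _ =>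
              mul_le_mul_of_nonneg_right (hmle k) (hA_nonneg k)
          _ = ((n : ℝ) - nmin) * ∑ k, (∑ i ∈ G k, max (Z i i - 1 / m k) 0) :=
            (Finset.mul_sum _ _ _).symm
          _ = _ := by rw [hAB]
      have hNM : (nmin : ℝ) ≤ (n : ℝ) - nmin := by
        have hk : (nmin : ℝ) ≤ m ⟨0, by omega⟩ := hmge _
        linarith [hmle ⟨0, by omega⟩]
      have hNMnn : (0 : ℝ) ≤ (n : ℝ) - nmin := le_trans hMpos.le hNM
      rw [div_mul_eq_mul_div, le_div_iff₀ hMpos]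
      have h1 := mul_le_mul_of_nonneg_right hTle2 hMpos.le
      have h2 := mul_le_mul_of_nonneg_left hBig hNMnn
      nlinarith [mul_nonneg hMpos.le hOUT_nonneg]
    · have hOUT0 : OUT = 0 := by
        rw [hOUTdef]
        apply Finset.sum_eq_zero
        intro j _
        have hGj : G (c j) = Finset.univ := by
          ext i
          simp only [hmemG, Finset.mem_univ, iff_true]
          have hi := (c i).isLt
          have hj := (c j).isLt
          exact Fin.ext (by omega)
        have hs1 : s (c j) j = 1 := by
          show ∑ l ∈ G (c j), Z l j = 1
          rw [hGj]
          exact hcolsum j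
        rw [hs1]; ring
      have hBnn : 0 ≤ ∑ k, (∑ i ∈ G k, max (1 / m k - Z i i) 0) :=
        Finset.sum_nonneg fun k _ => hB_nonneg k
      have hB0 : ∑ k, (∑ i ∈ G k, max (1 / m k - Z i i) 0) = 0 := by
        have hh := hBig
        rw [hOUT0] at hh
        refine le_antisymm ?_ hBnn
        apply le_of_mul_le_mul_left _ hMpos
        rw [mul_zero]
        linarith
      have hT0 : T ≤ 0 := by
        have h2 : ∑ k, m k * (∑ i ∈ G k, max (Z i i - 1 / m k) 0)
            ≤ ∑ k, (n : ℝ) * (∑ i ∈ G k, max (Z i i - 1 / m k) 0) := by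
          apply Finset.sum_le_sum
          intro k _
          apply mul_le_mul_of_nonneg_right _ (hA_nonneg k)
          rw [← hmval]
          have : (G k).card ≤ n := (Finset.card_le_univ (G k)).trans_eq (by simp)
          exact_mod_cast this
        rw [← Finset.mul_sum, hAB, hB0, mul_zero] at h2
        linarith [hTle]
      have hT0' : T = 0 := le_antisymm hT0 hT_nonneg
      rw [hOUT0, hT0']
      norm_num
end

section
/- Suppose Ẑ is an n×n matrix with |Ẑ − Z*|₁ ≤ 1/(3n̲), where Z* is the membership matrix of a partition of {1,…,n} into K equal-size clusters each of size n̲ (Z*_{ij} = 1/n̲ if i,j in the same cluster, else 0). Then the greedy rounding algorithm that repeatedly picks the smallest unassigned index j and forms the cluster {i : Ẑ_{ji} ≥ Ẑ_{jj}/2} recovers exactly the true partition: it outputs K̂ = K clusters with Ĝ_k = G_k* for all k. -/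
/-- Suppose `Ẑ` satisfies `|Ẑ − Z*|₁ ≤ 1/(3n̲)`, where `Z*` is the membership matrix of the
partition of `{1,…,n}` (`n = K n̲`) into `K` contiguous equal-size clusters
`G_k* = {(k−1)n̲+1, …, k n̲}` of size `n̲`. Then the greedy rounding algorithm (repeatedly
pick the smallest unassigned index `j` and form the cluster `{i : Ẑ_{ji} ≥ Ẑ_{jj}/2}`)
recovers the true partition exactly: it stops with `K̂ = K` and `Ĝ_k = G_k*` for all `k`. -/
theorem stmt_18 {K nb n : ℕ} (hnb : 0 < nb) (hK : 0 < K) (hn : n = K * nb)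
    (Zstar Zhat : Matrix (Fin n) (Fin n) ℝ)
    (hZstar : ∀ i j, Zstar i j =
      if (i : ℕ) / nb = (j : ℕ) / nb then 1 / (nb : ℝ) else 0)
    (hclose : (∑ i, ∑ j, |Zhat i j - Zstar i j|) ≤ 1 / (3 * (nb : ℝ)))
    -- the run of the greedy rounding algorithm:
    (Khat : ℕ) (Ghat : ℕ → Finset (Fin n)) (R : ℕ → Finset (Fin n))
    (hR0 : R 0 = Finset.univ)
    (hRsucc : ∀ k, R (k + 1) = R k \ Ghat k)
    (hne : ∀ k, k < Khat → (R k).Nonempty)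
    (hG : ∀ k, k < Khat → ∀ h : (R k).Nonempty,
      Ghat k = Finset.univ.filter
        (fun i => Zhat ((R k).min' h) ((R k).min' h) / 2 ≤ Zhat ((R k).min' h) i))
    (hstop : R Khat = ∅) :
    Khat = K ∧
      ∀ k, k < K → Ghat k = Finset.univ.filter (fun i : Fin n => (i : ℕ) / nb = k) := by
  have hx : (0:ℝ) < nb := by exact_mod_cast hnb
  set y : ℝ := 1 / (nb : ℝ) with hy
  have hy0 : 0 < y := by positivity
  have h3y : 1 / (3 * (nb:ℝ)) = y / 3 := by rw [hy]; ring
  -- row bounds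
  have hrowsum : ∀ j : Fin n, ∑ j', |Zhat j j' - Zstar j j'| ≤ y / 3 := by
    intro j
    have h1 : ∑ j', |Zhat j j' - Zstar j j'| ≤ ∑ i', ∑ j', |Zhat i' j' - Zstar i' j'| :=
      Finset.single_le_sum (f := fun i' => ∑ j', |Zhat i' j' - Zstar i' j'|)
        (fun i' _ => Finset.sum_nonneg fun _ _ => abs_nonneg _) (Finset.mem_univ j)
    linarith [hclose, h3y ▸ hclose]
  have hdiag : ∀ j : Fin n, |Zhat j j - Zstar j j| ≤ y / 3 := by
    intro j
    have := Finset.single_le_sum (f := fun j' => |Zhat j j' - Zstar j j'|)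
      (fun _ _ => abs_nonneg _) (Finset.mem_univ j)
    linarith [hrowsum j]
  have hrow : ∀ j i : Fin n, i ≠ j →
      |Zhat j j - Zstar j j| + |Zhat j i - Zstar j i| ≤ y / 3 := by
    intro j i hij
    have hsub : ({j, i} : Finset (Fin n)) ⊆ Finset.univ := Finset.subset_univ _
    have h2 := Finset.sum_le_sum_of_subset_of_nonneg hsub
      (f := fun j' => |Zhat j j' - Zstar j j'|) (fun _ _ _ => abs_nonneg _)
    rw [Finset.sum_pair (Ne.symm hij)] at h2
    linarith [hrowsum j]
  -- the cluster identified at a pivot j is exactly the true cluster of j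
  have hclust : ∀ j : Fin n,
      Finset.univ.filter (fun i => Zhat j j / 2 ≤ Zhat j i)
        = Finset.univ.filter (fun i : Fin n => (i:ℕ)/nb = (j:ℕ)/nb) := by
    intro j
    have hjj : Zstar j j = y := by rw [hZstar]; simp [hy]
    ext i
    simp only [Finset.mem_filter, Finset.mem_univ, true_and]
    by_cases hij : i = j
    · subst hij
      have h1 := hdiag i
      rw [hjj] at h1
      constructor
      · intro _; rfl
      · intro _
        have := abs_le.mp h1
        linarith [this.1, this.2]
    · have h1 := hrow j i hij
      rw [hjj] at h1
      have ha1 := le_abs_self (Zhat j j - y)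
      have ha2 := neg_abs_le (Zhat j j - y)
      by_cases hc : (i:ℕ)/nb = (j:ℕ)/nb
      · have hji : Zstar j i = y := by rw [hZstar]; simp [hc.symm, hy]
        rw [hji] at h1
        have hb2 := neg_abs_le (Zhat j i - y)
        have habs := abs_nonneg (Zhat j i - y)
        simp only [hc, iff_true]
        linarith
      · have hji : Zstar j i = 0 := by
          rw [hZstar]
          rw [if_neg (fun h => hc h.symm)]
        rw [hji, sub_zero] at h1
        have hb1 := le_abs_self (Zhat j i)
        have habs := abs_nonneg (Zhat j j - y)
        simp only [hc, iff_false, not_le]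
        linarith
  -- division facts
  have hdiv : ∀ (m k : ℕ), m / nb = k ↔ k * nb ≤ m ∧ m < (k+1) * nb := by
    intro m k
    rw [← Nat.le_div_iff_mul_le hnb, ← Nat.div_lt_iff_lt_mul hnb]
    omega
  -- the shape of Ghat k given the shape of R k
  have hGform : ∀ k, k < K → ∀ hk' : k < Khat,
      R k = Finset.univ.filter (fun i : Fin n => k * nb ≤ (i:ℕ)) →
      Ghat k = Finset.univ.filter (fun i : Fin n => (i:ℕ)/nb = k) := by
    intro k hk hk' hRk
    have hne' : (R k).Nonempty := hne k hk'
    have hlt : k * nb < n := by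
      rw [hn]; exact Nat.mul_lt_mul_of_lt_of_le hk (le_refl nb) hnb
    have hmem : (⟨k*nb, hlt⟩ : Fin n) ∈ R k := by
      rw [hRk]; simp
    have h1 := Finset.min'_le _ _ hmem
    have h2 : (R k).min' hne' ∈ Finset.univ.filter (fun i : Fin n => k * nb ≤ (i:ℕ)) := by
      rw [← hRk]; exact Finset.min'_mem _ hne'
    rw [Finset.mem_filter] at h2
    have hmval : (((R k).min' hne') : ℕ) = k * nb := le_antisymm h1 h2.2
    have hmdiv : (((R k).min' hne') : ℕ) / nb = k := by
      rw [hmval, Nat.mul_div_cancel _ hnb]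
    rw [hG k hk' hne', hclust]
    ext i
    simp only [Finset.mem_filter, Finset.mem_univ, true_and, hmdiv]
  -- main induction on R
  have hRk : ∀ k, k ≤ K → k ≤ Khat →
      R k = Finset.univ.filter (fun i : Fin n => k * nb ≤ (i:ℕ)) := by
    intro k
    induction k with
    | zero => intro _ _; rw [hR0]; ext i; simp
    | succ k ih =>
      intro hkK hkKhat
      have hk : k < K := lt_of_lt_of_le (Nat.lt_succ_self k) hkK
      have hk' : k < Khat := lt_of_lt_of_le (Nat.lt_succ_self k) hkKhat
      have hRkk := ih (le_of_lt hk) (le_of_lt hk')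
      have hGk := hGform k hk hk' hRkk
      rw [hRsucc, hRkk, hGk]
      ext i
      simp only [Finset.mem_sdiff, Finset.mem_filter, Finset.mem_univ, true_and, hdiv,
        Nat.succ_mul]
      omega
  -- Khat = K
  have hKK : Khat = K := by
    rcases lt_trichotomy Khat K with h | h | h
    · exfalso
      have hRK := hRk Khat (le_of_lt h) (le_refl _)
      have hlt : Khat * nb < n := by
        rw [hn]; exact Nat.mul_lt_mul_of_lt_of_le h (le_refl nb) hnb
      have : (⟨Khat*nb, hlt⟩ : Fin n) ∈ R Khat := by rw [hRK]; simp
      rw [hstop] at this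
      exact absurd this (Finset.notMem_empty _)
    · exact h
    · exfalso
      have hRK := hRk K (le_refl _) (le_of_lt h)
      obtain ⟨i, hi⟩ := hne K h
      rw [hRK, Finset.mem_filter] at hi
      have h2 : (i:ℕ) < K * nb := lt_of_lt_of_le i.isLt (le_of_eq hn)
      omega
  refine ⟨hKK, fun k hk => ?_⟩
  have hk' : k < Khat := hKK ▸ hk
  exact hGform k hk hk' (hRk k (le_of_lt hk) (le_of_lt hk'))
end
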